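/- arXiv:2404.15434 — 4 statements merged into one kernel-verified Lean document; each statement's English description precedes it below -/
import Mathlib

section
/- Let η ∈ ℝ ∖ {0} and t > 0. Then μ₁({𝒜 ∈ 𝔄(M,A) : |F_η(𝒜)| ≥ t}) ≤ 2 exp(−A t² / 16). -/
open MeasureTheory Finset Filter Topology

namespace FUPRandom

/-- The space of alphabets of cardinality `A` from digits `{0, ..., M-1}`. -/
def Alphabet (M A : ℕ) : Type := {s : Finset (Fin M) // s.card = A}

instance (M A : ℕ) : Fintype (Alphabet M A) := by unfold Alphabet; infer_instance
instance (M A : ℕ) : DecidableEq (Alphabet M A) := by unfold Alphabet; infer_instance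
instance (M A : ℕ) : MeasurableSpace (Alphabet M A) := ⊤

/-- The uniform (counting) probability measure on a finite type. -/
noncomputable def uniformMeasure (α : Type*) [Fintype α] [MeasurableSpace α] : Measure α :=
  (Fintype.card α : ENNReal)⁻¹ • Measure.count

/-- `F_η(𝒜) = (1/A) ∑_{a ∈ 𝒜} e^{-iηa} - (1/M) ∑_{a=0}^{M-1} e^{-iηa}`. -/
noncomputable def Feta (M A : ℕ) (η : ℝ) (𝒜 : Alphabet M A) : ℂ :=
  (A : ℂ)⁻¹ * ∑ a ∈ 𝒜.val, Complex.exp (-(Complex.I * η * (a : ℕ)))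
    - (M : ℂ)⁻¹ * ∑ a ∈ Finset.range M, Complex.exp (-(Complex.I * η * a))

/-- A configuration: for each level `j` (counted from `0`, corresponding to the
`(j+1)`-st iteration of the construction), an alphabet for each of the `A ^ j`
points of the previous level, indexed via `finFunctionFinEquiv`. -/
def Config (M A : ℕ) : Type := (j : ℕ) → (Fin (A ^ j) → Alphabet M A)

instance (M A : ℕ) : MeasurableSpace (Config M A) := by unfold Config; infer_instance

/-- The `k`-th smallest digit of an alphabet, as a natural number. -/
def digit {M A : ℕ} (𝒜 : Alphabet M A) (k : Fin A) : ℕ :=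
  ((𝒜.val.orderIsoOfFin 𝒜.prop k : Fin M) : ℕ)

/-- The point of `B_j` indexed by a word `w : Fin j → Fin A`, for a given
configuration `ω`. -/
noncomputable def cantorPoint (M A : ℕ) (ω : Config M A) : (j : ℕ) → (Fin j → Fin A) → ℝ
  | 0, _ => 0
  | (j + 1), w =>
      cantorPoint M A ω j (fun i => w i.castSucc)
        + (digit (ω j (finFunctionFinEquiv (fun i => w i.castSucc))) (w (Fin.last j)) : ℝ)
          / (M : ℝ) ^ (j + 1)

/-- The `j`-th iteration `𝒞_j` of the Cantor set: a union of `A ^ j` closed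
intervals of length `M ^ (-j)`. -/
noncomputable def cantorIter (M A : ℕ) (ω : Config M A) (j : ℕ) : Set ℝ :=
  ⋃ w : Fin j → Fin A,
    Set.Icc (cantorPoint M A ω j w) (cantorPoint M A ω j w + ((M : ℝ) ^ j)⁻¹)

/-- The Cantor set `𝒞 = ⋂_{j ≥ 1} 𝒞_j`. -/
noncomputable def cantorSet (M A : ℕ) (ω : Config M A) : Set ℝ :=
  ⋂ j ∈ {j : ℕ | 1 ≤ j}, cantorIter M A ω j

/-- The measure `ν_j`, with density `(M/A)^j 1_{𝒞_j}` w.r.t. Lebesgue measure. -/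
noncomputable def cantorMeasureIter (M A : ℕ) (ω : Config M A) (j : ℕ) : Measure ℝ :=
  ((M : ENNReal) ^ j / (A : ENNReal) ^ j) • (volume.restrict (cantorIter M A ω j))

/-- `ν` is the weak limit of the measures `ν_j`. -/
def IsCantorMeasure (M A : ℕ) (ω : Config M A) (ν : Measure ℝ) : Prop :=
  ∀ f : BoundedContinuousFunction ℝ ℝ,
    Tendsto (fun j => ∫ x, f x ∂(cantorMeasureIter M A ω j)) atTop (𝓝 (∫ x, f x ∂ν))

/-- `μ^∞` is the product of the uniform probability measures: a probability
measure on the configuration space whose coordinates are independent and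
uniformly distributed. -/
def IsProductUniform (M A : ℕ) (P : Measure (Config M A)) : Prop :=
  IsProbabilityMeasure P ∧
    ProbabilityTheory.iIndepFun (fun j ω => ω j) P ∧
    ∀ j : ℕ, P.map (fun ω => ω j) = uniformMeasure (Fin (A ^ j) → Alphabet M A)

/-- The Fourier transform `ℱν(ξ) = (2π)^{-1/2} ∫ e^{-ixξ} dν(x)` of a measure. -/
noncomputable def fourierMeasure (ν : Measure ℝ) (ξ : ℝ) : ℂ :=
  (Real.sqrt (2 * Real.pi) : ℂ)⁻¹ * ∫ x, Complex.exp (-(Complex.I * x * ξ)) ∂ν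

/-- The Fourier transform `ℱu(ξ) = (2π)^{-1/2} ∫ e^{-ixξ} u(x) dx` of a function. -/
noncomputable def fourierFn (u : ℝ → ℂ) (ξ : ℝ) : ℂ :=
  (Real.sqrt (2 * Real.pi) : ℂ)⁻¹ * ∫ x : ℝ, Complex.exp (-(Complex.I * x * ξ)) * u x

/-- The semiclassical Fourier transform
`ℱ_h u(ξ) = (2πh)^{-1/2} ∫ e^{-ixξ/h} u(x) dx`. -/
noncomputable def semiclassicalFourier (h : ℝ) (u : ℝ → ℂ) (ξ : ℝ) : ℂ :=
  (Real.sqrt (2 * Real.pi * h) : ℂ)⁻¹ * ∫ x : ℝ, Complex.exp (-(Complex.I * x * ξ / h)) * u x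



section Auxiliary

variable {M : ℕ}

lemma exp_le_quad {y : ℝ} (hy : y ^ 2 ≤ 2) : Real.exp y ≤ 1 + y + y ^ 2 := by
  rcases le_or_gt y 0 with h | h
  · have h4 : (0:ℝ) < 1 - y := by linarith
    have h3 : Real.exp y * (1 - y) ≤ 1 := by
      have := Real.add_one_le_exp (-y)
      have e : Real.exp y * Real.exp (-y) = 1 := by
        rw [← Real.exp_add]; simp
      nlinarith [Real.exp_pos y]
    nlinarith [Real.exp_pos y]
  · have hy2 : |y/2| ≤ 1 := by
      rw [abs_le]; constructor <;> nlinarith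
    have hb : Real.exp (y/2) ≤ 1 + y/2 + (3/4) * (y/2)^2 := by
      have := Real.exp_bound hy2 (n := 2) (by norm_num)
      have hs : ∑ m ∈ range 2, (y/2) ^ m / (m.factorial : ℝ) = 1 + y/2 := by
        simp [Finset.sum_range_succ]
      rw [hs] at this
      have := abs_le.mp this
      norm_num at this ⊢
      nlinarith [this.2, sq_abs (y/2)]
    have hbpos : (0:ℝ) ≤ 1 + y/2 + (3/4) * (y/2)^2 := by positivity
    have he : Real.exp y = Real.exp (y/2) * Real.exp (y/2) := by
      rw [← Real.exp_add]; ring_nf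
    have h2 : Real.exp y ≤ (1 + y/2 + (3/4) * (y/2)^2)^2 := by
      rw [he, sq]
      exact mul_le_mul hb hb (Real.exp_pos _).le hbpos
    nlinarith [sq_nonneg (y - 1), sq_nonneg y]

lemma sum_reindex (n : ℕ) (g : Finset (Fin M) → Fin M → ℝ) :
    ∑ S ∈ powersetCard n (univ : Finset (Fin M)), ∑ b ∈ Sᶜ, g S b
      = ∑ T ∈ powersetCard (n+1) (univ : Finset (Fin M)), ∑ b ∈ T, g (T.erase b) b := by
  rw [Finset.sum_sigma' (powersetCard n (univ : Finset (Fin M))) (fun S => Sᶜ) (fun S b => g S b),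
    Finset.sum_sigma' (powersetCard (n+1) (univ : Finset (Fin M))) (fun T => T) (fun T b => g (T.erase b) b)]
  refine Finset.sum_nbij' (fun p => ⟨insert p.2 p.1, p.2⟩) (fun p => ⟨p.1.erase p.2, p.2⟩) ?_ ?_ ?_ ?_ ?_
  · rintro ⟨S, b⟩ hp
    simp only [Finset.mem_sigma, Finset.mem_powersetCard_univ, Finset.mem_compl] at hp ⊢
    exact ⟨by rw [Finset.card_insert_of_notMem hp.2, hp.1], Finset.mem_insert_self _ _⟩
  · rintro ⟨T, b⟩ hp
    simp only [Finset.mem_sigma, Finset.mem_powersetCard_univ, Finset.mem_compl] at hp ⊢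
    exact ⟨by rw [Finset.card_erase_of_mem hp.2, hp.1]; rfl, Finset.notMem_erase _ _⟩
  · rintro ⟨S, b⟩ hp
    simp only [Finset.mem_sigma, Finset.mem_powersetCard_univ, Finset.mem_compl] at hp
    simp [Finset.erase_insert hp.2]
  · rintro ⟨T, b⟩ hp
    simp only [Finset.mem_sigma, Finset.mem_powersetCard_univ, Finset.mem_compl] at hp
    simp [Finset.insert_erase hp.2]
  · rintro ⟨S, b⟩ hp
    simp only [Finset.mem_sigma, Finset.mem_powersetCard_univ, Finset.mem_compl] at hp
    simp [Finset.erase_insert hp.2]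

/-- (A+1) e_{A+1} identity -/
lemma L1 (x : Fin M → ℝ) (A : ℕ) :
    ∑ S ∈ powersetCard A (univ : Finset (Fin M)), (∑ b ∈ Sᶜ, x b) * ∏ a ∈ S, x a
      = (A + 1 : ℝ) * ∑ T ∈ powersetCard (A+1) (univ : Finset (Fin M)), ∏ a ∈ T, x a := by
  have h1 : ∀ S ∈ powersetCard A (univ : Finset (Fin M)),
      (∑ b ∈ Sᶜ, x b) * ∏ a ∈ S, x a = ∑ b ∈ Sᶜ, x b * ∏ a ∈ S, x a := fun S _ =>
    Finset.sum_mul _ _ _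
  rw [Finset.sum_congr rfl h1, sum_reindex A (fun S b => x b * ∏ a ∈ S, x a)]
  rw [Finset.mul_sum]
  refine Finset.sum_congr rfl fun T hT => ?_
  rw [Finset.mem_powersetCard_univ] at hT
  have : ∀ b ∈ T, x b * ∏ a ∈ T.erase b, x a = ∏ a ∈ T, x a := fun b hb =>
    Finset.mul_prod_erase T x hb
  rw [Finset.sum_congr rfl this, Finset.sum_const, hT]
  simp [nsmul_eq_mul]

/-- inner Cauchy–Schwarz computation -/
lemma inner_cs (x : Fin M → ℝ) (V : Finset (Fin M)) :
    0 ≤ ∑ a ∈ V, (∑ b ∈ V.erase a, (x a - x b)) * x a := by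
  have h1 : ∀ a ∈ V, (∑ b ∈ V.erase a, (x a - x b)) * x a
      = ((V.card : ℝ) * x a - ∑ b ∈ V, x b) * x a := by
    intro a ha
    congr 1
    rw [Finset.sum_erase_eq_sub ha, Finset.sum_sub_distrib, Finset.sum_const, nsmul_eq_mul]
    ring
  rw [Finset.sum_congr rfl h1]
  have expand : ∑ a ∈ V, ((V.card : ℝ) * x a - ∑ b ∈ V, x b) * x a
      = (V.card : ℝ) * (∑ a ∈ V, x a ^ 2) - (∑ a ∈ V, x a) ^ 2 := by
    rw [Finset.sum_congr rfl (fun a _ => by ring_nf :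
      ∀ a ∈ V, ((V.card : ℝ) * x a - ∑ b ∈ V, x b) * x a
        = (V.card : ℝ) * x a ^ 2 - (∑ b ∈ V, x b) * x a)]
    rw [Finset.sum_sub_distrib, ← Finset.mul_sum, ← Finset.mul_sum, sq]
  rw [expand, sub_nonneg]
  exact_mod_cast sq_sum_le_card_mul_sum_sq (s := V) (f := x)

/-- pairing positivity -/
lemma L2 (x : Fin M → ℝ) (hx : ∀ a, 0 ≤ x a) (A : ℕ) (hA : 1 ≤ A) (hAM : A ≤ M) :
    0 ≤ ∑ S ∈ powersetCard A (univ : Finset (Fin M)),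
      (((M : ℝ) - A) * (∑ a ∈ S, x a) - (A : ℝ) * (∑ b ∈ Sᶜ, x b)) * ∏ a ∈ S, x a := by
  have scalar : ∀ S ∈ powersetCard A (univ : Finset (Fin M)),
      ((M : ℝ) - A) * (∑ a ∈ S, x a) - (A : ℝ) * (∑ b ∈ Sᶜ, x b)
        = ∑ a ∈ S, ∑ b ∈ Sᶜ, (x a - x b) := by
    intro S hS
    rw [Finset.mem_powersetCard_univ] at hS
    have h1 : ∀ a ∈ S, ∑ b ∈ Sᶜ, (x a - x b) = ((Sᶜ.card : ℝ)) * x a - ∑ b ∈ Sᶜ, x b := by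
      intro a _
      rw [Finset.sum_sub_distrib, Finset.sum_const, nsmul_eq_mul]
    rw [Finset.sum_congr rfl h1, Finset.sum_sub_distrib, ← Finset.mul_sum, Finset.sum_const,
      nsmul_eq_mul, Finset.card_compl, hS]
    have : ((M - A : ℕ) : ℝ) = (M : ℝ) - A := by
      rw [Nat.cast_sub hAM]
    simp only [Fintype.card_fin, this]
  have step1 : ∀ S ∈ powersetCard A (univ : Finset (Fin M)),
      (((M : ℝ) - A) * (∑ a ∈ S, x a) - (A : ℝ) * (∑ b ∈ Sᶜ, x b)) * ∏ a ∈ S, x a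
        = ∑ a ∈ S, (fun R c => (∑ b ∈ Rᶜ.erase c, (x c - x b)) * (x c * ∏ d ∈ R, x d))
            (S.erase a) a := by
    intro S hS
    have hSmem := hS
    rw [Finset.mem_powersetCard_univ] at hS
    rw [scalar S hSmem, Finset.sum_mul]
    refine Finset.sum_congr rfl fun a ha => ?_
    have hcompl : ((S.erase a)ᶜ).erase a = Sᶜ := by
      rw [Finset.compl_erase, Finset.erase_insert (by simp [ha])]
    have hprod : x a * ∏ c ∈ S.erase a, x c = ∏ c ∈ S, x c := Finset.mul_prod_erase S x ha
    simp only [hcompl, hprod]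
  rw [Finset.sum_congr rfl step1]
  obtain ⟨A, rfl⟩ : ∃ n, A = n + 1 := ⟨A - 1, (Nat.succ_pred_eq_of_pos hA).symm⟩
  rw [← sum_reindex A (fun R c => (∑ b ∈ Rᶜ.erase c, (x c - x b)) * (x c * ∏ d ∈ R, x d))]
  refine Finset.sum_nonneg fun R _ => ?_
  have h2 : ∀ c ∈ Rᶜ, (∑ b ∈ Rᶜ.erase c, (x c - x b)) * (x c * ∏ d ∈ R, x d)
      = ((∑ b ∈ Rᶜ.erase c, (x c - x b)) * x c) * ∏ d ∈ R, x d := fun c _ => by ring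
  rw [Finset.sum_congr rfl h2, ← Finset.sum_mul]
  exact mul_nonneg (inner_cs x Rᶜ) (Finset.prod_nonneg fun d _ => hx d)

lemma key_ineq (x : Fin M → ℝ) (hx : ∀ a, 0 ≤ x a) (A : ℕ) (hAM : A < M) :
    (M : ℝ) * (A + 1) * ∑ T ∈ powersetCard (A+1) (univ : Finset (Fin M)), ∏ a ∈ T, x a
      ≤ ((M : ℝ) - A) * (∑ a, x a) *
          ∑ S ∈ powersetCard A (univ : Finset (Fin M)), ∏ a ∈ S, x a := by
  set e1 : ℝ := ∑ a, x a with he1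
  have htot : ∀ S : Finset (Fin M), (∑ a ∈ S, x a) + (∑ b ∈ Sᶜ, x b) = e1 := fun S =>
    Finset.sum_add_sum_compl S x
  set Sig1 : ℝ := ∑ S ∈ powersetCard A (univ : Finset (Fin M)), (∑ a ∈ S, x a) * ∏ a ∈ S, x a
    with hs1
  set Sig2 : ℝ := ∑ S ∈ powersetCard A (univ : Finset (Fin M)), (∑ b ∈ Sᶜ, x b) * ∏ a ∈ S, x a
    with hs2
  have hL1 : Sig2 = (A + 1 : ℝ) * ∑ T ∈ powersetCard (A+1) (univ : Finset (Fin M)), ∏ a ∈ T, x a :=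
    L1 x A
  have hsum : Sig1 + Sig2 = e1 * ∑ S ∈ powersetCard A (univ : Finset (Fin M)), ∏ a ∈ S, x a := by
    rw [hs1, hs2, ← Finset.sum_add_distrib, Finset.mul_sum]
    exact Finset.sum_congr rfl fun S _ => by rw [← add_mul, htot S]
  have hL2 : 0 ≤ ((M : ℝ) - A) * Sig1 - (A : ℝ) * Sig2 := by
    rcases Nat.eq_zero_or_pos A with h0 | hpos
    · subst h0
      simp only [Nat.cast_zero, zero_mul, sub_zero]
      refine mul_nonneg (by push_cast; positivity) (Finset.sum_nonneg fun S hS => ?_)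
      rw [Finset.mem_powersetCard_univ] at hS
      rw [Finset.card_eq_zero] at hS
      subst hS
      simp
    · have := L2 x hx A hpos hAM.le
      calc (0:ℝ) ≤ ∑ S ∈ powersetCard A (univ : Finset (Fin M)),
            (((M : ℝ) - A) * (∑ a ∈ S, x a) - (A : ℝ) * (∑ b ∈ Sᶜ, x b)) * ∏ a ∈ S, x a := this
        _ = ((M : ℝ) - A) * Sig1 - (A : ℝ) * Sig2 := by
            rw [hs1, hs2, Finset.mul_sum, Finset.mul_sum, ← Finset.sum_sub_distrib]
            exact Finset.sum_congr rfl fun S _ => by ring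
  have hMA : (0:ℝ) ≤ (M : ℝ) - A := by
    have : (A : ℝ) < M := by exact_mod_cast hAM
    linarith
  nlinarith [hL2, hsum, hL1]

lemma maclaurin (x : Fin M → ℝ) (hx : ∀ a, 0 ≤ x a) :
    ∀ A : ℕ, A ≤ M → ∑ S ∈ powersetCard A (univ : Finset (Fin M)), ∏ a ∈ S, x a
      ≤ (M.choose A : ℝ) * ((∑ a, x a) / M) ^ A := by
  intro A
  induction A with
  | zero => intro _; simp
  | succ A ih =>
    intro hAM
    have hAM' : A < M := hAM
    have hM0 : (0:ℝ) < M := by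
      have : 0 < M := lt_of_le_of_lt (Nat.zero_le A) hAM'
      exact_mod_cast this
    set e1 : ℝ := ∑ a, x a with he1
    have he1nn : 0 ≤ e1 := Finset.sum_nonneg fun a _ => hx a
    have hkey := key_ineq x hx A hAM'
    have hih := ih hAM'.le
    have hMA : (0:ℝ) ≤ (M : ℝ) - A := by
      have : (A : ℝ) < M := by exact_mod_cast hAM'
      linarith
    have hC : ((M : ℝ) - A) * (M.choose A : ℝ) = ((A:ℝ) + 1) * (M.choose (A+1) : ℝ) := by
      have h := Nat.choose_succ_right_eq M A
      have h2 : ((M.choose (A + 1) * (A + 1) : ℕ) : ℝ) = ((M.choose A * (M - A) : ℕ) : ℝ) := by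
        exact_mod_cast congrArg (Nat.cast : ℕ → ℝ) h
      push_cast [Nat.cast_sub hAM'.le] at h2
      linarith
    have hpos : (0:ℝ) < (M : ℝ) * (A + 1) := by positivity
    rw [← mul_le_mul_iff_right₀ hpos]
    calc (M : ℝ) * (A + 1) * ∑ T ∈ powersetCard (A+1) (univ : Finset (Fin M)), ∏ a ∈ T, x a
        ≤ ((M : ℝ) - A) * e1 * ∑ S ∈ powersetCard A (univ : Finset (Fin M)), ∏ a ∈ S, x a :=
          hkey
      _ ≤ ((M : ℝ) - A) * e1 * ((M.choose A : ℝ) * (e1 / M) ^ A) := by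
          exact mul_le_mul_of_nonneg_left hih (by positivity)
      _ = (M : ℝ) * (A + 1) * ((M.choose (A+1) : ℝ) * (e1 / M) ^ (A+1)) := by
          rw [pow_succ]
          have hMe : (M:ℝ) * (e1 / M) = e1 := mul_div_cancel₀ _ hM0.ne'
          linear_combination (e1 * (e1 / M) ^ A) * hC
            - (((A:ℝ) + 1) * (M.choose (A+1) : ℝ) * (e1 / M) ^ A) * hMe

lemma alphabet_sum (M A : ℕ) (g : Finset (Fin M) → ℝ) :
    ∑ 𝒜 : Alphabet M A, g 𝒜.val = ∑ S ∈ powersetCard A (univ : Finset (Fin M)), g S := by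
  rw [Finset.sum_subtype (powersetCard A (univ : Finset (Fin M)))
    (fun S => Finset.mem_powersetCard_univ) g]
  rfl


lemma tail_bound (M A : ℕ) (hM : 1 ≤ M) (hA1 : 1 ≤ A) (hAM : A ≤ M)
    (f : Fin M → ℝ) (hf : ∀ a, |f a| ≤ 1) (s : ℝ) (hs : 0 ≤ s) (hs2 : s^2 ≤ 2) :
    ((Finset.univ.filter (fun 𝒜 : Alphabet M A =>
        s ≤ (∑ a ∈ 𝒜.val, (f a - (∑ b, f b)/M)) / A)).card : ℝ)
      ≤ (M.choose A : ℝ) * Real.exp (-(A * s^2)/4) := by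
  have hM0 : (0:ℝ) < M := by exact_mod_cast hM
  have hA0 : (0:ℝ) < A := by exact_mod_cast hA1
  set m : ℝ := (∑ b, f b)/M with hm
  set lam : ℝ := s/2 with hlam
  have hlam0 : 0 ≤ lam := by positivity
  set x : Fin M → ℝ := fun a => Real.exp (lam * (f a - m)) with hxdef
  have hx : ∀ a, 0 ≤ x a := fun a => (Real.exp_pos _).le
  -- centered function has zero sum
  have hm_abs : |m| ≤ 1 := by
    rw [hm, abs_div, abs_of_pos hM0, div_le_one hM0]
    calc |∑ b, f b| ≤ ∑ b, |f b| := Finset.abs_sum_le_sum_abs _ _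
      _ ≤ ∑ _b : Fin M, (1:ℝ) := Finset.sum_le_sum fun b _ => hf b
      _ = M := by simp
  have hsum0 : ∑ a, (f a - m) = 0 := by
    rw [Finset.sum_sub_distrib, Finset.sum_const, nsmul_eq_mul]
    simp only [Finset.card_univ, Fintype.card_fin, hm]
    field_simp
    simp
  -- single point mgf bound
  have hmean : (∑ a, x a) / M ≤ Real.exp (lam^2) := by
    have hxa : ∀ a, x a ≤ 1 + lam * (f a - m) + lam^2 * (f a - m)^2 := by
      intro a
      have hy2 : (lam * (f a - m))^2 ≤ 2 := by
        have h1 : |f a - m| ≤ 2 := by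
          have := hf a
          rw [abs_le] at this hm_abs ⊢
          constructor <;> linarith [this.1, this.2, hm_abs.1, hm_abs.2]
        have h2 : (f a - m)^2 ≤ 4 := by nlinarith [abs_nonneg (f a - m), sq_abs (f a - m)]
        have h3 : lam^2 ≤ 1/2 := by rw [hlam]; nlinarith
        calc (lam * (f a - m))^2 = lam^2 * (f a - m)^2 := by ring
          _ ≤ (1/2) * 4 := by
              apply mul_le_mul h3 h2 (sq_nonneg _) (by norm_num)
          _ = 2 := by norm_num
      calc x a ≤ 1 + lam * (f a - m) + (lam * (f a - m))^2 := exp_le_quad hy2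
        _ = 1 + lam * (f a - m) + lam^2 * (f a - m)^2 := by ring
    have hsq : ∑ a, (f a - m)^2 ≤ M := by
      have hsf : ∑ b, f b = (M:ℝ) * m := by
        rw [hm, mul_div_cancel₀ _ (ne_of_gt hM0)]
      have expand : ∑ a, (f a - m)^2 = (∑ a, f a^2) - (M:ℝ) * m^2 := by
        have e1 : ∀ a : Fin M, (f a - m)^2 = f a^2 - 2*m*(f a) + m^2 := fun a => by ring
        rw [Finset.sum_congr rfl (fun a _ => e1 a), Finset.sum_add_distrib,
          Finset.sum_sub_distrib, ← Finset.mul_sum, Finset.sum_const, nsmul_eq_mul,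
          Finset.card_univ, Fintype.card_fin, hsf]
        ring
      have hf2 : ∑ a, f a^2 ≤ M := by
        calc ∑ a, f a^2 ≤ ∑ _a : Fin M, (1:ℝ) := by
              refine Finset.sum_le_sum fun a _ => ?_
              nlinarith [hf a, abs_nonneg (f a), sq_abs (f a)]
          _ = M := by simp
      nlinarith [sq_nonneg m]
    have hsumx : ∑ a, x a ≤ (M:ℝ) * (1 + lam^2) := by
      calc ∑ a, x a ≤ ∑ a, (1 + lam * (f a - m) + lam^2 * (f a - m)^2) :=
            Finset.sum_le_sum fun a _ => hxa a
        _ = (M:ℝ) + lam * ∑ a, (f a - m) + lam^2 * ∑ a, (f a - m)^2 := by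
            rw [Finset.sum_add_distrib, Finset.sum_add_distrib, ← Finset.mul_sum,
              ← Finset.mul_sum, Finset.sum_const, nsmul_eq_mul]
            simp only [Fintype.card_fin, mul_one, Finset.card_univ]
        _ ≤ (M:ℝ) + 0 + lam^2 * M := by
            rw [hsum0, mul_zero]
            have := mul_le_mul_of_nonneg_left hsq (sq_nonneg lam)
            linarith
        _ = (M:ℝ) * (1 + lam^2) := by ring
    rw [div_le_iff₀ hM0]
    calc ∑ a, x a ≤ (M:ℝ) * (1 + lam^2) := hsumx
      _ ≤ Real.exp (lam^2) * M := by
          have := Real.add_one_le_exp (lam^2)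
          nlinarith
  -- Chernoff
  have hcard : ((Finset.univ.filter (fun 𝒜 : Alphabet M A =>
        s ≤ (∑ a ∈ 𝒜.val, (f a - m)) / A)).card : ℝ) * Real.exp (lam * A * s)
      ≤ (M.choose A : ℝ) * Real.exp (lam^2) ^ A := by
    calc ((Finset.univ.filter (fun 𝒜 : Alphabet M A =>
            s ≤ (∑ a ∈ 𝒜.val, (f a - m)) / A)).card : ℝ) * Real.exp (lam * A * s)
        = ∑ _𝒜 ∈ Finset.univ.filter (fun 𝒜 : Alphabet M A =>
            s ≤ (∑ a ∈ 𝒜.val, (f a - m)) / A), Real.exp (lam * A * s) := by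
          rw [Finset.sum_const, nsmul_eq_mul]
      _ ≤ ∑ 𝒜 ∈ Finset.univ.filter (fun 𝒜 : Alphabet M A =>
            s ≤ (∑ a ∈ 𝒜.val, (f a - m)) / A), ∏ a ∈ 𝒜.val, x a := by
          refine Finset.sum_le_sum fun 𝒜 h𝒜 => ?_
          rw [Finset.mem_filter] at h𝒜
          have h1 : lam * A * s ≤ ∑ a ∈ 𝒜.val, lam * (f a - m) := by
            rw [← Finset.mul_sum]
            have h2 : A * s ≤ ∑ a ∈ 𝒜.val, (f a - m) := by
              have := h𝒜.2
              rw [le_div_iff₀ hA0] at this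
              linarith
            calc lam * A * s = lam * (A * s) := by ring
              _ ≤ lam * ∑ a ∈ 𝒜.val, (f a - m) := mul_le_mul_of_nonneg_left h2 hlam0
          calc Real.exp (lam * A * s) ≤ Real.exp (∑ a ∈ 𝒜.val, lam * (f a - m)) :=
                Real.exp_le_exp.mpr h1
            _ = ∏ a ∈ 𝒜.val, x a := Real.exp_sum _ _
      _ ≤ ∑ 𝒜 : Alphabet M A, ∏ a ∈ 𝒜.val, x a := by
          refine Finset.sum_le_sum_of_subset_of_nonneg (Finset.filter_subset _ _)
            fun 𝒜 _ _ => Finset.prod_nonneg fun a _ => hx a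
      _ = ∑ S ∈ powersetCard A (univ : Finset (Fin M)), ∏ a ∈ S, x a :=
          alphabet_sum M A (fun S => ∏ a ∈ S, x a)
      _ ≤ (M.choose A : ℝ) * ((∑ a, x a) / M) ^ A := maclaurin x hx A hAM
      _ ≤ (M.choose A : ℝ) * Real.exp (lam^2) ^ A := by
          refine mul_le_mul_of_nonneg_left ?_ (by positivity)
          exact pow_le_pow_left₀ (by positivity) hmean A
  have hE : (0:ℝ) < Real.exp (lam * A * s) := Real.exp_pos _
  rw [← Real.exp_nat_mul] at hcard
  have final : ((Finset.univ.filter (fun 𝒜 : Alphabet M A =>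
        s ≤ (∑ a ∈ 𝒜.val, (f a - m)) / A)).card : ℝ)
      ≤ (M.choose A : ℝ) * Real.exp (-(A * s^2)/4) := by
    rw [← le_div_iff₀ hE] at hcard
    calc ((Finset.univ.filter (fun 𝒜 : Alphabet M A =>
          s ≤ (∑ a ∈ 𝒜.val, (f a - m)) / A)).card : ℝ)
        ≤ (M.choose A : ℝ) * Real.exp ((A:ℝ) * lam^2) / Real.exp (lam * A * s) := hcard
      _ = (M.choose A : ℝ) * Real.exp ((A:ℝ) * lam^2 - lam * A * s) := by
          rw [mul_div_assoc, Real.exp_sub]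
      _ = (M.choose A : ℝ) * Real.exp (-(A * s^2)/4) := by
          congr 1
          rw [hlam]
          ring_nf
  exact final

lemma exp_term_eq (η r : ℝ) :
    Complex.exp (-(Complex.I * (η:ℂ) * (r:ℂ))) = Complex.exp ((↑(-(η*r)) : ℂ) * Complex.I) := by
  congr 1
  push_cast
  ring

lemma abs_exp_term (η r : ℝ) : ‖Complex.exp (-(Complex.I * (η:ℂ) * (r:ℂ)))‖ = 1 := by
  rw [exp_term_eq, Complex.norm_exp_ofReal_mul_I]

lemma abs_Feta_le (M A : ℕ) (hM : 1 ≤ M) (hA : 1 ≤ A) (η : ℝ) (𝒜 : Alphabet M A) :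
    ‖Feta M A η 𝒜‖ ≤ 2 := by
  have hM0 : (0:ℝ) < M := by exact_mod_cast hM
  have hA0 : (0:ℝ) < A := by exact_mod_cast hA
  have h1 : ∀ (T : Finset (Fin M)) (g : Fin M → ℂ),
      ‖∑ a ∈ T, Complex.exp (-(Complex.I * η * ((a:ℕ):ℂ)))‖ ≤ T.card := by
    intro T g
    calc ‖∑ a ∈ T, Complex.exp (-(Complex.I * η * ((a:ℕ):ℂ)))‖
        ≤ ∑ a ∈ T, ‖Complex.exp (-(Complex.I * η * ((a:ℕ):ℂ)))‖ :=
          norm_sum_le _ _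
      _ = ∑ _a ∈ T, (1:ℝ) := Finset.sum_congr rfl fun a _ => by
          have := abs_exp_term η ((a:ℕ):ℝ)
          push_cast at this ⊢
          exact this
      _ = T.card := by simp
  have h2 : ‖∑ a ∈ Finset.range M, Complex.exp (-(Complex.I * η * (a:ℂ)))‖ ≤ M := by
    calc ‖∑ a ∈ Finset.range M, Complex.exp (-(Complex.I * η * (a:ℂ)))‖
        ≤ ∑ a ∈ Finset.range M, ‖Complex.exp (-(Complex.I * η * (a:ℂ)))‖ :=
          norm_sum_le _ _
      _ = ∑ _a ∈ Finset.range M, (1:ℝ) := Finset.sum_congr rfl fun a _ => by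
          have := abs_exp_term η (a:ℝ)
          push_cast at this ⊢
          exact this
      _ = M := by simp
  rw [Feta]
  calc ‖(A : ℂ)⁻¹ * ∑ a ∈ 𝒜.val, Complex.exp (-(Complex.I * η * ((a:ℕ):ℂ)))
        - (M : ℂ)⁻¹ * ∑ a ∈ Finset.range M, Complex.exp (-(Complex.I * η * (a:ℂ)))‖
      ≤ ‖(A : ℂ)⁻¹ * ∑ a ∈ 𝒜.val, Complex.exp (-(Complex.I * η * ((a:ℕ):ℂ)))‖
        + ‖(M : ℂ)⁻¹ * ∑ a ∈ Finset.range M, Complex.exp (-(Complex.I * η * (a:ℂ)))‖ :=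
        norm_sub_le _ _
    _ ≤ 2 := by
        rw [norm_mul, norm_mul]
        have e1 : ‖(A:ℂ)⁻¹‖ = (A:ℝ)⁻¹ := by
          rw [norm_inv]
          simp
        have e2 : ‖(M:ℂ)⁻¹‖ = (M:ℝ)⁻¹ := by
          rw [norm_inv]
          simp
        rw [e1, e2]
        have b1 := h1 𝒜.val (fun _ => 0)
        rw [𝒜.prop] at b1
        have c1 : (A:ℝ)⁻¹ * ‖∑ a ∈ 𝒜.val, Complex.exp (-(Complex.I * η * ((a:ℕ):ℂ)))‖ ≤ 1 := by
          rw [inv_mul_le_iff₀ hA0, mul_one]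
          exact b1
        have c2 : (M:ℝ)⁻¹ * ‖∑ a ∈ Finset.range M, Complex.exp (-(Complex.I * η * (a:ℂ)))‖ ≤ 1 := by
          rw [inv_mul_le_iff₀ hM0, mul_one]
          exact h2
        linarith

lemma Feta_re (M A : ℕ) (hM : 1 ≤ M) (hA : 1 ≤ A) (η : ℝ) (𝒜 : Alphabet M A) :
    (Feta M A η 𝒜).re
      = (∑ a ∈ 𝒜.val, (Real.cos (η * (a:ℕ)) - (∑ b : Fin M, Real.cos (η * (b:ℕ)))/M))/A := by
  have hM0 : (0:ℝ) < M := by exact_mod_cast hM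
  have hA0 : (0:ℝ) < A := by exact_mod_cast hA
  have hre : ∀ r : ℝ, (Complex.exp (-(Complex.I * (η:ℂ) * (r:ℂ)))).re = Real.cos (η * r) := by
    intro r
    rw [exp_term_eq, Complex.exp_ofReal_mul_I_re, Real.cos_neg]
  have hA' : ((A:ℂ))⁻¹ = (((A:ℝ)⁻¹ : ℝ) : ℂ) := by simp
  have hM' : ((M:ℂ))⁻¹ = (((M:ℝ)⁻¹ : ℝ) : ℂ) := by simp
  rw [Feta, Complex.sub_re, hA', hM', Complex.re_ofReal_mul, Complex.re_ofReal_mul,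
    Complex.re_sum, Complex.re_sum]
  have t1 : ∑ a ∈ 𝒜.val, (Complex.exp (-(Complex.I * η * ((a:ℕ):ℂ)))).re
      = ∑ a ∈ 𝒜.val, Real.cos (η * (a:ℕ)) :=
    Finset.sum_congr rfl fun a _ => by
      have := hre ((a:ℕ):ℝ)
      push_cast at this ⊢
      exact this
  have t2 : ∑ a ∈ Finset.range M, (Complex.exp (-(Complex.I * η * (a:ℂ)))).re
      = ∑ b : Fin M, Real.cos (η * (b:ℕ)) := by
    rw [Fin.sum_univ_eq_sum_range (fun i => Real.cos (η * i)) M]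
    refine Finset.sum_congr rfl fun a _ => ?_
    have := hre (a:ℝ)
    push_cast at this ⊢
    exact this
  rw [t1, t2, Finset.sum_sub_distrib, Finset.sum_const, 𝒜.prop, nsmul_eq_mul]
  field_simp

lemma Feta_im (M A : ℕ) (hM : 1 ≤ M) (hA : 1 ≤ A) (η : ℝ) (𝒜 : Alphabet M A) :
    (Feta M A η 𝒜).im
      = (∑ a ∈ 𝒜.val, ((-Real.sin (η * (a:ℕ))) - (∑ b : Fin M, (-Real.sin (η * (b:ℕ))))/M))/A := by
  have hM0 : (0:ℝ) < M := by exact_mod_cast hM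
  have hA0 : (0:ℝ) < A := by exact_mod_cast hA
  have hre : ∀ r : ℝ, (Complex.exp (-(Complex.I * (η:ℂ) * (r:ℂ)))).im = -Real.sin (η * r) := by
    intro r
    rw [exp_term_eq, Complex.exp_ofReal_mul_I_im, Real.sin_neg]
  have hA' : ((A:ℂ))⁻¹ = (((A:ℝ)⁻¹ : ℝ) : ℂ) := by simp
  have hM' : ((M:ℂ))⁻¹ = (((M:ℝ)⁻¹ : ℝ) : ℂ) := by simp
  rw [Feta, Complex.sub_im, hA', hM', Complex.im_ofReal_mul, Complex.im_ofReal_mul,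
    Complex.im_sum, Complex.im_sum]
  have t1 : ∑ a ∈ 𝒜.val, (Complex.exp (-(Complex.I * η * ((a:ℕ):ℂ)))).im
      = ∑ a ∈ 𝒜.val, -Real.sin (η * (a:ℕ)) :=
    Finset.sum_congr rfl fun a _ => by
      have := hre ((a:ℕ):ℝ)
      push_cast at this ⊢
      exact this
  have t2 : ∑ a ∈ Finset.range M, (Complex.exp (-(Complex.I * η * (a:ℂ)))).im
      = ∑ b : Fin M, -Real.sin (η * (b:ℕ)) := by
    rw [Fin.sum_univ_eq_sum_range (fun i => -Real.sin (η * i)) M]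
    refine Finset.sum_congr rfl fun a _ => ?_
    have := hre (a:ℝ)
    push_cast at this ⊢
    exact this
  rw [t1, t2, Finset.sum_sub_distrib, Finset.sum_const, 𝒜.prop, nsmul_eq_mul]
  field_simp

end Auxiliary

section MainProof

lemma card_alphabet (M A : ℕ) : Fintype.card (Alphabet M A) = M.choose A := by
  have h1 : Fintype.card (Alphabet M A) = Fintype.card {s : Finset (Fin M) // s.card = A} :=
    Fintype.card_congr (Equiv.refl _)
  rw [h1, Fintype.card_finset_len, Fintype.card_fin]

lemma neg_event_eq (M A : ℕ) (hM : 1 ≤ M) (f : Fin M → ℝ) (𝒜 : Alphabet M A) :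
    (∑ a ∈ 𝒜.val, ((fun z => -f z) a - (∑ b, (fun z => -f z) b)/(M:ℝ)))/(A:ℝ)
      = -((∑ a ∈ 𝒜.val, (f a - (∑ b, f b)/M))/A) := by
  have h1 : ∀ a : Fin M, (fun z => -f z) a - (∑ b, (fun z => -f z) b)/(M:ℝ)
      = -(f a - (∑ b, f b)/M) := by
    intro a
    simp only
    rw [Finset.sum_neg_distrib]
    ring
  rw [Finset.sum_congr rfl (fun a _ => h1 a), Finset.sum_neg_distrib, neg_div]

lemma arith_helper (c e C : ℝ) (h1 : 0 < C) (h2 : 0 < e) (h3 : e < 1/2)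
    (h4 : c ≤ 4*(C*(e*e))) : c ≤ C*(2*e) := by
  nlinarith [mul_nonneg (mul_nonneg h1.le h2.le) (by linarith : (0:ℝ) ≤ 1 - 2*e)]

lemma main_card_bound (M A : ℕ) (hM : 3 ≤ M) (hA1 : 1 ≤ A) (hAM : A ≤ M)
    (η : ℝ) (t : ℝ) (ht : 0 < t) :
    ((Finset.univ.filter (fun 𝒜 : Alphabet M A => t ≤ ‖Feta M A η 𝒜‖)).card : ℝ)
      ≤ (M.choose A : ℝ) * (2 * Real.exp (-((A:ℝ) * t ^ 2) / 16)) := by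
  classical
  have hM1 : 1 ≤ M := le_trans (by norm_num) hM
  have hA0 : (0:ℝ) < A := by exact_mod_cast hA1
  have hC0 : (0:ℝ) < (M.choose A : ℝ) := by exact_mod_cast Nat.choose_pos hAM
  set R : ℝ := 2 * Real.exp (-((A:ℝ) * t ^ 2) / 16) with hR
  by_cases hR1 : 1 ≤ R
  · calc ((Finset.univ.filter (fun 𝒜 : Alphabet M A =>
          t ≤ ‖Feta M A η 𝒜‖)).card : ℝ)
        ≤ ((Finset.univ : Finset (Alphabet M A)).card : ℝ) := by
          exact_mod_cast Finset.card_le_card (Finset.filter_subset _ _)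
      _ = (M.choose A : ℝ) := by
          rw [Finset.card_univ, card_alphabet]
      _ ≤ (M.choose A : ℝ) * R := le_mul_of_one_le_right hC0.le hR1
  · push_neg at hR1
    have hexp : Real.exp (-((A:ℝ) * t ^ 2) / 16) < 1/2 := by
      rw [hR] at hR1
      linarith
    by_cases ht2 : 2 < t
    · have hempty : Finset.univ.filter (fun 𝒜 : Alphabet M A =>
          t ≤ ‖Feta M A η 𝒜‖) = ∅ := by
        rw [Finset.filter_eq_empty_iff]
        intro 𝒜 _
        push_neg
        calc ‖Feta M A η 𝒜‖ ≤ 2 := abs_Feta_le M A hM1 hA1 η 𝒜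
          _ < t := ht2
      rw [hempty]
      simp only [Finset.card_empty, Nat.cast_zero]
      positivity
    · push_neg at ht2
      set s : ℝ := t / Real.sqrt 2 with hsdef
      have hsqrt2 : (0:ℝ) < Real.sqrt 2 := Real.sqrt_pos.mpr (by norm_num)
      have hs0 : 0 ≤ s := by positivity
      have hs2 : s ^ 2 = t ^ 2 / 2 := by
        rw [hsdef, div_pow, Real.sq_sqrt (by norm_num : (0:ℝ) ≤ 2)]
      have hs2' : s ^ 2 ≤ 2 := by nlinarith
      set f1 : Fin M → ℝ := fun a => Real.cos (η * (a:ℕ)) with hf1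
      set f3 : Fin M → ℝ := fun a => -Real.sin (η * (a:ℕ)) with hf3
      have hf1b : ∀ a, |f1 a| ≤ 1 := fun a => Real.abs_cos_le_one _
      have hf2b : ∀ a, |(fun z => -f1 z) a| ≤ 1 := fun a => by
        simp only [abs_neg]; exact hf1b a
      have hf3b : ∀ a, |f3 a| ≤ 1 := fun a => by
        simp only [hf3, abs_neg]; exact Real.abs_sin_le_one _
      have hf4b : ∀ a, |(fun z => -f3 z) a| ≤ 1 := fun a => by
        simp only [abs_neg]; exact hf3b a
      set E1 := Finset.univ.filter (fun 𝒜 : Alphabet M A =>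
        s ≤ (∑ a ∈ 𝒜.val, (f1 a - (∑ b, f1 b)/M))/A) with hE1
      set E2 := Finset.univ.filter (fun 𝒜 : Alphabet M A =>
        s ≤ (∑ a ∈ 𝒜.val, ((fun z => -f1 z) a - (∑ b, (fun z => -f1 z) b)/M))/A) with hE2
      set E3 := Finset.univ.filter (fun 𝒜 : Alphabet M A =>
        s ≤ (∑ a ∈ 𝒜.val, (f3 a - (∑ b, f3 b)/M))/A) with hE3
      set E4 := Finset.univ.filter (fun 𝒜 : Alphabet M A =>
        s ≤ (∑ a ∈ 𝒜.val, ((fun z => -f3 z) a - (∑ b, (fun z => -f3 z) b)/M))/A) with hE4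
      have hsubset : Finset.univ.filter (fun 𝒜 : Alphabet M A =>
          t ≤ ‖Feta M A η 𝒜‖) ⊆ (E1 ∪ E2) ∪ (E3 ∪ E4) := by
        intro 𝒜 h𝒜
        rw [Finset.mem_filter] at h𝒜
        have habs : t ≤ ‖Feta M A η 𝒜‖ := h𝒜.2
        have hsq : t ^ 2 ≤ (Feta M A η 𝒜).re ^ 2 + (Feta M A η 𝒜).im ^ 2 := by
          have h1 : t ^ 2 ≤ ‖Feta M A η 𝒜‖ ^ 2 := by
            nlinarith [norm_nonneg (Feta M A η 𝒜)]
          rwa [Complex.sq_norm, Complex.normSq_apply, ← sq, ← sq] at h1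
        have hcase : s ^ 2 ≤ (Feta M A η 𝒜).re ^ 2 ∨ s ^ 2 ≤ (Feta M A η 𝒜).im ^ 2 := by
          by_contra hcon
          push_neg at hcon
          rw [hs2] at hcon
          nlinarith [hcon.1, hcon.2]
        have hre : (Feta M A η 𝒜).re = (∑ a ∈ 𝒜.val, (f1 a - (∑ b, f1 b)/M))/A :=
          Feta_re M A hM1 hA1 η 𝒜
        have him : (Feta M A η 𝒜).im = (∑ a ∈ 𝒜.val, (f3 a - (∑ b, f3 b)/M))/A :=
          Feta_im M A hM1 hA1 η 𝒜
        rcases hcase with hc | hc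
        · have habsre : s ≤ |(Feta M A η 𝒜).re| := by
            by_contra hcc
            push_neg at hcc
            nlinarith [sq_abs (Feta M A η 𝒜).re, abs_nonneg (Feta M A η 𝒜).re]
          rcases le_abs.mp habsre with hc2 | hc2
          · refine Finset.mem_union_left _ (Finset.mem_union_left _ ?_)
            rw [hE1, Finset.mem_filter]
            exact ⟨Finset.mem_univ _, by rw [← hre]; exact hc2⟩
          · refine Finset.mem_union_left _ (Finset.mem_union_right _ ?_)
            rw [hE2, Finset.mem_filter]
            refine ⟨Finset.mem_univ _, ?_⟩
            rw [neg_event_eq M A hM1 f1 𝒜, ← hre]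
            exact hc2
        · have habsim : s ≤ |(Feta M A η 𝒜).im| := by
            by_contra hcc
            push_neg at hcc
            nlinarith [sq_abs (Feta M A η 𝒜).im, abs_nonneg (Feta M A η 𝒜).im]
          rcases le_abs.mp habsim with hc2 | hc2
          · refine Finset.mem_union_right _ (Finset.mem_union_left _ ?_)
            rw [hE3, Finset.mem_filter]
            exact ⟨Finset.mem_univ _, by rw [← him]; exact hc2⟩
          · refine Finset.mem_union_right _ (Finset.mem_union_right _ ?_)
            rw [hE4, Finset.mem_filter]
            refine ⟨Finset.mem_univ _, ?_⟩
            rw [neg_event_eq M A hM1 f3 𝒜, ← him]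
            exact hc2
      have hcard4 : ((Finset.univ.filter (fun 𝒜 : Alphabet M A =>
          t ≤ ‖Feta M A η 𝒜‖)).card : ℝ)
          ≤ (E1.card : ℝ) + E2.card + E3.card + E4.card := by
        have h1 : (Finset.univ.filter (fun 𝒜 : Alphabet M A =>
            t ≤ ‖Feta M A η 𝒜‖)).card ≤ ((E1 ∪ E2) ∪ (E3 ∪ E4)).card :=
          Finset.card_le_card hsubset
        have h2 : ((E1 ∪ E2) ∪ (E3 ∪ E4)).card ≤ E1.card + E2.card + E3.card + E4.card := by
          calc ((E1 ∪ E2) ∪ (E3 ∪ E4)).card ≤ (E1 ∪ E2).card + (E3 ∪ E4).card :=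
                Finset.card_union_le _ _
            _ ≤ (E1.card + E2.card) + (E3.card + E4.card) :=
                Nat.add_le_add (Finset.card_union_le _ _) (Finset.card_union_le _ _)
            _ = E1.card + E2.card + E3.card + E4.card := by ring
        exact_mod_cast le_trans h1 h2
      have hb1 := tail_bound M A hM1 hA1 hAM f1 hf1b s hs0 hs2'
      have hb2 := tail_bound M A hM1 hA1 hAM (fun z => -f1 z) hf2b s hs0 hs2'
      have hb3 := tail_bound M A hM1 hA1 hAM f3 hf3b s hs0 hs2'
      have hb4 := tail_bound M A hM1 hA1 hAM (fun z => -f3 z) hf4b s hs0 hs2'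
      rw [← hE1] at hb1
      rw [← hE2] at hb2
      rw [← hE3] at hb3
      rw [← hE4] at hb4
      have hE : Real.exp (-((A:ℝ) * s^2)/4) = Real.exp (-((A:ℝ) * t^2)/16)
          * Real.exp (-((A:ℝ) * t^2)/16) := by
        rw [← Real.exp_add, hs2]
        congr 1
        ring
      have hfinal : (E1.card : ℝ) + E2.card + E3.card + E4.card
          ≤ (M.choose A : ℝ) * R := by
        have h4 : (E1.card : ℝ) + E2.card + E3.card + E4.card
            ≤ 4 * ((M.choose A : ℝ) * Real.exp (-((A:ℝ) * s^2)/4)) := by linarith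
        rw [hE] at h4
        have hexp0 : 0 < Real.exp (-((A:ℝ) * t^2)/16) := Real.exp_pos _
        rw [hR]
        exact arith_helper _ _ _ hC0 hexp0 hexp h4
      linarith

instance (M A : ℕ) : MeasurableSingletonClass (Alphabet M A) :=
  ⟨fun _ => MeasurableSpace.measurableSet_top⟩

end MainProof

set_option maxHeartbeats 1000000 in
/-- **Concentration of `F_η`.**
For `η ≠ 0` and `t > 0`, `μ₁({𝒜 : |F_η(𝒜)| ≥ t}) ≤ 2 exp(-A t² / 16)`. -/
theorem concentration_Feta (M A : ℕ) (hM : 3 ≤ M) (hA1 : 1 ≤ A) (hAM : A ≤ M)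
    (η : ℝ) (hη : η ≠ 0) (t : ℝ) (ht : 0 < t) :
    uniformMeasure (Alphabet M A) {𝒜 : Alphabet M A | t ≤ ‖Feta M A η 𝒜‖}
      ≤ ENNReal.ofReal (2 * Real.exp (-(A * t ^ 2) / 16)) := by
  classical
  have hAM0 : 0 < M.choose A := Nat.choose_pos hAM
  have main := main_card_bound M A hM hA1 hAM η t ht
  rw [uniformMeasure, Measure.smul_apply, smul_eq_mul]
  have hfin : ({𝒜 : Alphabet M A | t ≤ ‖Feta M A η 𝒜‖}).Finite :=
    Set.toFinite _
  rw [Measure.count_apply_finite _ hfin]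
  have hset : hfin.toFinset
      = Finset.univ.filter (fun 𝒜 : Alphabet M A => t ≤ ‖Feta M A η 𝒜‖) := by
    ext 𝒜
    simp
  rw [hset, card_alphabet]
  have hC0 : ((M.choose A : ℕ) : ENNReal) ≠ 0 := Nat.cast_ne_zero.mpr hAM0.ne'
  have hCtop : ((M.choose A : ℕ) : ENNReal) ≠ ⊤ := ENNReal.natCast_ne_top _
  calc ((M.choose A : ℕ) : ENNReal)⁻¹
        * ((Finset.univ.filter (fun 𝒜 : Alphabet M A =>
            t ≤ ‖Feta M A η 𝒜‖)).card : ENNReal)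
      ≤ ((M.choose A : ℕ) : ENNReal)⁻¹ * (((M.choose A : ℕ) : ENNReal)
          * ENNReal.ofReal (2 * Real.exp (-(A * t ^ 2) / 16))) := by
        refine mul_le_mul_right ?_ _
        calc ((Finset.univ.filter (fun 𝒜 : Alphabet M A =>
              t ≤ ‖Feta M A η 𝒜‖)).card : ENNReal)
            = ENNReal.ofReal (((Finset.univ.filter (fun 𝒜 : Alphabet M A =>
                t ≤ ‖Feta M A η 𝒜‖)).card : ℝ)) := by
              rw [ENNReal.ofReal_natCast]
          _ ≤ ENNReal.ofReal ((M.choose A : ℝ)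
                * (2 * Real.exp (-((A:ℝ) * t ^ 2) / 16))) :=
              ENNReal.ofReal_le_ofReal main
          _ = ((M.choose A : ℕ) : ENNReal)
                * ENNReal.ofReal (2 * Real.exp (-(A * t ^ 2) / 16)) := by
              rw [ENNReal.ofReal_mul (by positivity), ENNReal.ofReal_natCast]
    _ = ENNReal.ofReal (2 * Real.exp (-(A * t ^ 2) / 16)) := by
        rw [← mul_assoc, ENNReal.inv_mul_cancel hC0 hCtop, one_mul]

end FUPRandom
end

section
/- Let η ∈ ℝ ∖ {0}. Then the variance of F_η, regarded as a random variable on (𝔄(M,A), μ₁), satisfies Var[F_η] = 𝔼[|F_η|²] ≤ 32/A. -/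
open MeasureTheory Finset Filter Topology

namespace FUPRandom

/-- Number of `A`-subsets of a fintype containing a fixed subset `t`. -/
lemma count_superset {α : Type*} [DecidableEq α] [Fintype α] (A : ℕ) (t : Finset α)
    (ht : t.card ≤ A) :
    (((univ : Finset α).powersetCard A).filter (fun s => t ⊆ s)).card
      = (Fintype.card α - t.card).choose (A - t.card) := by
  have h : (((univ : Finset α).powersetCard A).filter (fun s => t ⊆ s)).card
      = (((univ : Finset α) \ t).powersetCard (A - t.card)).card := by
    apply Finset.card_bij' (fun s _ => s \ t) (fun u _ => u ∪ t)
    · intro s hs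
      simp only [mem_filter, Finset.mem_powersetCard] at hs
      obtain ⟨⟨-, hcard⟩, hts⟩ := hs
      rw [Finset.mem_powersetCard]
      refine ⟨Finset.sdiff_subset_sdiff (subset_univ s) le_rfl, ?_⟩
      rw [card_sdiff_of_subset hts, hcard]
    · intro u hu
      rw [Finset.mem_powersetCard] at hu
      obtain ⟨hsub, hcard⟩ := hu
      have hdisj : Disjoint u t := (Finset.subset_sdiff.mp hsub).2
      simp only [mem_filter, Finset.mem_powersetCard]
      refine ⟨⟨subset_univ _, ?_⟩, Finset.subset_union_right⟩
      rw [Finset.card_union_of_disjoint hdisj, hcard]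
      omega
    · intro s hs
      simp only [mem_filter] at hs
      exact Finset.sdiff_union_of_subset hs.2
    · intro u hu
      rw [Finset.mem_powersetCard] at hu
      have hdisj : Disjoint u t := (Finset.subset_sdiff.mp hu.1).2
      exact Finset.union_sdiff_cancel_right hdisj
  rw [h, Finset.card_powersetCard, card_sdiff_of_subset (subset_univ t), card_univ]

/-- Swap a sum over subsets with the inner double sum. -/
lemma sum_pairs_swap {α : Type*} [DecidableEq α] [Fintype α] (𝒯 : Finset (Finset α))
    (h : α → α → ℝ) :
    ∑ s ∈ 𝒯, ∑ a ∈ s, ∑ b ∈ s, h a b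
      = ∑ a : α, ∑ b : α, ((𝒯.filter (fun s => a ∈ s ∧ b ∈ s)).card : ℝ) * h a b := by
  have e1 : ∀ (g : α → ℝ) (s : Finset α), ∑ b ∈ s, g b = ∑ b : α, if b ∈ s then g b else 0 := by
    intro g s
    rw [Finset.sum_ite_mem, Finset.univ_inter]
  calc ∑ s ∈ 𝒯, ∑ a ∈ s, ∑ b ∈ s, h a b
      = ∑ s ∈ 𝒯, ∑ a : α, ∑ b : α, if a ∈ s ∧ b ∈ s then h a b else 0 := by
        refine Finset.sum_congr rfl fun s _ => ?_
        rw [e1 (fun a => ∑ b ∈ s, h a b) s]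
        refine Finset.sum_congr rfl fun a _ => ?_
        by_cases ha : a ∈ s
        · simp only [ha, if_true, true_and]
          rw [e1 (h a) s]
        · simp [ha]
    _ = ∑ a : α, ∑ b : α, ∑ s ∈ 𝒯, if a ∈ s ∧ b ∈ s then h a b else 0 := by
        rw [Finset.sum_comm]
        exact Finset.sum_congr rfl fun a _ => Finset.sum_comm
    _ = ∑ a : α, ∑ b : α, ((𝒯.filter (fun s => a ∈ s ∧ b ∈ s)).card : ℝ) * h a b := by
        refine Finset.sum_congr rfl fun a _ => Finset.sum_congr rfl fun b _ => ?_
        rw [← Finset.sum_filter, Finset.sum_const, nsmul_eq_mul]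

lemma sum_normSq_le {M A : ℕ} (hA : 2 ≤ A)
    (f : Fin M → ℂ) (hf : ∑ a, f a = 0) :
    ∑ s ∈ (univ : Finset (Fin M)).powersetCard A, Complex.normSq (∑ a ∈ s, f a)
      ≤ ((M - 1).choose (A - 1) : ℝ) * ∑ a, Complex.normSq (f a) := by
  set h : Fin M → Fin M → ℝ := fun a b => (f a * (starRingEnd ℂ) (f b)).re with hh
  have hstep1 : ∀ s : Finset (Fin M),
      Complex.normSq (∑ a ∈ s, f a) = ∑ a ∈ s, ∑ b ∈ s, h a b := by
    intro s
    have : (Complex.normSq (∑ a ∈ s, f a) : ℂ)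
        = (∑ a ∈ s, f a) * (starRingEnd ℂ) (∑ b ∈ s, f b) := (Complex.mul_conj _).symm
    have hre := congrArg Complex.re this
    simp only [Complex.ofReal_re] at hre
    rw [hre, map_sum, Finset.sum_mul_sum, Complex.re_sum]
    exact Finset.sum_congr rfl fun a _ => Complex.re_sum _ _
  have hdiag : ∀ a : Fin M, h a a = Complex.normSq (f a) := by
    intro a
    have : (f a * (starRingEnd ℂ) (f a)) = (Complex.normSq (f a) : ℂ) := Complex.mul_conj _
    rw [hh]; simp only [this, Complex.ofReal_re]
  set D : ℝ := ∑ a, Complex.normSq (f a) with hD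
  have hDnonneg : 0 ≤ D := Finset.sum_nonneg fun a _ => Complex.normSq_nonneg _
  set 𝒯 := (univ : Finset (Fin M)).powersetCard A with h𝒯
  set c1 : ℕ := (M - 1).choose (A - 1) with hc1
  set c2 : ℕ := (M - 2).choose (A - 2) with hc2
  -- counts
  have hcount1 : ∀ a : Fin M, (𝒯.filter (fun s => a ∈ s ∧ a ∈ s)).card = c1 := by
    intro a
    rw [show (𝒯.filter (fun s => a ∈ s ∧ a ∈ s))
        = 𝒯.filter (fun s => ({a} : Finset (Fin M)) ⊆ s) from
      Finset.filter_congr (fun s _ => by simp), h𝒯,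
      count_superset A {a} (by simpa using hA.trans' (by norm_num))]
    simp [hc1, Fintype.card_fin]
  have hcount2 : ∀ a b : Fin M, a ≠ b →
      (𝒯.filter (fun s => a ∈ s ∧ b ∈ s)).card = c2 := by
    intro a b hab
    rw [show (𝒯.filter (fun s => a ∈ s ∧ b ∈ s))
        = 𝒯.filter (fun s => ({a, b} : Finset (Fin M)) ⊆ s) from
      Finset.filter_congr (fun s _ => by simp [Finset.insert_subset_iff]), h𝒯,
      count_superset A {a, b} (by rw [Finset.card_pair hab]; exact hA)]
    rw [Finset.card_pair hab, hc2, Fintype.card_fin]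
  -- total double sum is zero
  have htotal : ∑ a : Fin M, ∑ b : Fin M, h a b = 0 := by
    rw [← hstep1 Finset.univ, hf, map_zero]
  -- main computation
  calc ∑ s ∈ 𝒯, Complex.normSq (∑ a ∈ s, f a)
      = ∑ s ∈ 𝒯, ∑ a ∈ s, ∑ b ∈ s, h a b := Finset.sum_congr rfl fun s _ => hstep1 s
    _ = ∑ a : Fin M, ∑ b : Fin M, ((𝒯.filter (fun s => a ∈ s ∧ b ∈ s)).card : ℝ) * h a b :=
        sum_pairs_swap 𝒯 h
    _ = ∑ a : Fin M, ((c1 : ℝ) * h a a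
          + ∑ b ∈ Finset.univ.erase a, (c2 : ℝ) * h a b) := by
        refine Finset.sum_congr rfl fun a _ => ?_
        rw [← Finset.add_sum_erase _ _ (Finset.mem_univ a), hcount1 a]
        congr 1
        refine Finset.sum_congr rfl fun b hb => ?_
        rw [hcount2 a b (Ne.symm (Finset.ne_of_mem_erase hb))]
    _ = (c1 : ℝ) * D + (c2 : ℝ) * (0 - D) := by
        rw [Finset.sum_add_distrib]
        congr 1
        · rw [← Finset.mul_sum, hD]
          congr 1
          exact Finset.sum_congr rfl fun a _ => hdiag a
        · simp only [← Finset.mul_sum]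
          congr 1
          rw [← htotal, hD]
          rw [← Finset.sum_sub_distrib]
          refine Finset.sum_congr rfl fun a _ => ?_
          rw [← Finset.add_sum_erase _ (h a) (Finset.mem_univ a), hdiag a]
          ring
    _ ≤ (c1 : ℝ) * D := by
        have : (c2 : ℝ) * (0 - D) ≤ 0 := by
          apply mul_nonpos_of_nonneg_of_nonpos (Nat.cast_nonneg _)
          linarith
        linarith

/-- **Variance bound for `F_η`.**
For `η ≠ 0`, the variance of `F_η` on `(𝔄(M,A), μ₁)` satisfies
`Var[F_η] = 𝔼[|F_η|²] ≤ 32 / A` (using that `𝔼[F_η] = 0`). -/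
theorem variance_Feta (M A : ℕ) (hM : 3 ≤ M) (hA1 : 1 ≤ A) (hAM : A ≤ M)
    (η : ℝ) (hη : η ≠ 0) :
    (Fintype.card (Alphabet M A) : ℝ)⁻¹ *
        ∑ 𝒜 : Alphabet M A, ‖Feta M A η 𝒜‖ ^ 2
      ≤ 32 / A := by
  have hMpos : 0 < M := by omega
  have hApos : 0 < A := hA1
  have hAC : (A : ℂ) ≠ 0 := Nat.cast_ne_zero.mpr hApos.ne'
  have hMC : (M : ℂ) ≠ 0 := Nat.cast_ne_zero.mpr hMpos.ne'
  have hAR : (A : ℝ) ≠ 0 := Nat.cast_ne_zero.mpr hApos.ne'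
  have hMR : (M : ℝ) ≠ 0 := Nat.cast_ne_zero.mpr hMpos.ne'
  set S : ℂ := ∑ a ∈ Finset.range M, Complex.exp (-(Complex.I * η * a)) with hS
  set f : Fin M → ℂ :=
    fun a => Complex.exp (-(Complex.I * η * ((a : ℕ) : ℂ))) - (M : ℂ)⁻¹ * S with hf
  have habs_exp : ∀ n : ℕ, ‖Complex.exp (-(Complex.I * η * (n : ℂ)))‖ = 1 := by
    intro n
    rw [Complex.norm_exp]
    have : (-(Complex.I * η * (n : ℂ))).re = 0 := by simp
    rw [this, Real.exp_zero]
  have hse : ∑ a : Fin M, Complex.exp (-(Complex.I * η * ((a : ℕ) : ℂ))) = S := by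
    rw [hS]
    exact Fin.sum_univ_eq_sum_range (fun n => Complex.exp (-(Complex.I * η * n))) M
  have hsum_f : ∑ a : Fin M, f a = 0 := by
    have h1 : ∑ a : Fin M, f a
        = (∑ a : Fin M, Complex.exp (-(Complex.I * η * ((a : ℕ) : ℂ))))
          - (M : ℂ) * ((M : ℂ)⁻¹ * S) := by
      rw [hf, Finset.sum_sub_distrib, Finset.sum_const, Finset.card_univ, Fintype.card_fin,
        nsmul_eq_mul]
    rw [h1, mul_inv_cancel_left₀ hMC, hse, sub_self]
  have hmS : ‖(M : ℂ)⁻¹ * S‖ ≤ 1 := by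
    rw [norm_mul, norm_inv, Complex.norm_natCast]
    have hSb : ‖S‖ ≤ M := by
      rw [hS]
      calc ‖∑ a ∈ Finset.range M, Complex.exp (-(Complex.I * η * a))‖
          ≤ ∑ a ∈ Finset.range M, ‖Complex.exp (-(Complex.I * η * a))‖ :=
            norm_sum_le _ _
        _ = ∑ a ∈ Finset.range M, 1 := Finset.sum_congr rfl fun a _ => habs_exp a
        _ = M := by simp
    calc (M : ℝ)⁻¹ * ‖S‖ ≤ (M : ℝ)⁻¹ * M :=
          mul_le_mul_of_nonneg_left hSb (by positivity)
      _ = 1 := inv_mul_cancel₀ hMR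
  have habsf2 : ∀ a : Fin M, ‖f a‖ ≤ 2 := by
    intro a
    have htri : ‖f a‖
        ≤ ‖Complex.exp (-(Complex.I * η * ((a : ℕ) : ℂ)))‖
          + ‖(M : ℂ)⁻¹ * S‖ := by
      rw [hf]
      exact
        norm_sub_le (Complex.exp (-(Complex.I * η * ((a : ℕ) : ℂ)))) ((M : ℂ)⁻¹ * S)
    calc ‖f a‖
        ≤ ‖Complex.exp (-(Complex.I * η * ((a : ℕ) : ℂ)))‖
          + ‖(M : ℂ)⁻¹ * S‖ := htri
      _ ≤ 1 + 1 := add_le_add (le_of_eq (habs_exp (a : ℕ))) hmS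
      _ = 2 := by norm_num
  have hnormSq4 : ∀ a : Fin M, Complex.normSq (f a) ≤ 4 := by
    intro a
    rw [← Complex.sq_norm]
    nlinarith [habsf2 a, norm_nonneg (f a)]
  have hFeta : ∀ 𝒜 : Alphabet M A, Feta M A η 𝒜 = (A : ℂ)⁻¹ * ∑ a ∈ 𝒜.val, f a := by
    intro 𝒜
    have h1 : ∑ a ∈ 𝒜.val, f a
        = (∑ a ∈ 𝒜.val, Complex.exp (-(Complex.I * η * ((a : ℕ) : ℂ))))
          - (A : ℂ) * ((M : ℂ)⁻¹ * S) := by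
      rw [hf, Finset.sum_sub_distrib, Finset.sum_const, 𝒜.prop, nsmul_eq_mul]
    rw [h1, mul_sub, inv_mul_cancel_left₀ hAC]
    simp only [Feta, ← hS]
  have hterm : ∀ 𝒜 : Alphabet M A, ‖Feta M A η 𝒜‖ ^ 2
      = ((A : ℝ)⁻¹) ^ 2 * Complex.normSq (∑ a ∈ 𝒜.val, f a) := by
    intro 𝒜
    rw [hFeta 𝒜, norm_mul, mul_pow, norm_inv, Complex.norm_natCast, Complex.sq_norm]
  have hcard : Fintype.card (Alphabet M A) = M.choose A := by
    rw [show Fintype.card (Alphabet M A)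
        = Fintype.card {s : Finset (Fin M) // s.card = A} from rfl,
      Fintype.card_finset_len, Fintype.card_fin]
  have hNpos : 0 < M.choose A := Nat.choose_pos hAM
  have hb2 : ∀ 𝒜 : Alphabet M A, ‖Feta M A η 𝒜‖ ≤ 2 := by
    intro 𝒜
    rw [hFeta 𝒜, norm_mul, norm_inv, Complex.norm_natCast]
    have h1 : ‖∑ a ∈ 𝒜.val, f a‖ ≤ 2 * A := by
      calc ‖∑ a ∈ 𝒜.val, f a‖ ≤ ∑ a ∈ 𝒜.val, ‖f a‖ :=
            norm_sum_le _ _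
        _ ≤ ∑ _a ∈ 𝒜.val, (2 : ℝ) := Finset.sum_le_sum fun a _ => habsf2 a
        _ = 2 * A := by rw [Finset.sum_const, 𝒜.prop, nsmul_eq_mul, mul_comm]
    calc (A : ℝ)⁻¹ * ‖∑ a ∈ 𝒜.val, f a‖ ≤ (A : ℝ)⁻¹ * (2 * A) :=
          mul_le_mul_of_nonneg_left h1 (by positivity)
      _ = 2 := by field_simp
  rcases eq_or_lt_of_le hA1 with hA1' | hA2
  · -- trivial bound for A = 1
    have hA1'' : A = 1 := hA1'.symm
    subst hA1''
    have hsum4 : ∑ 𝒜 : Alphabet M 1, ‖Feta M 1 η 𝒜‖ ^ 2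
        ≤ (Fintype.card (Alphabet M 1) : ℝ) * 4 := by
      calc ∑ 𝒜 : Alphabet M 1, ‖Feta M 1 η 𝒜‖ ^ 2
          ≤ ∑ _𝒜 : Alphabet M 1, (4 : ℝ) := Finset.sum_le_sum fun 𝒜 _ => by
            nlinarith [hb2 𝒜, norm_nonneg (Feta M 1 η 𝒜)]
        _ = (Fintype.card (Alphabet M 1) : ℝ) * 4 := by
            rw [Finset.sum_const, Finset.card_univ, nsmul_eq_mul]
    have hNR : (0 : ℝ) < (Fintype.card (Alphabet M 1) : ℝ) := by
      rw [hcard]; exact_mod_cast hNpos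
    calc (Fintype.card (Alphabet M 1) : ℝ)⁻¹ *
          ∑ 𝒜 : Alphabet M 1, ‖Feta M 1 η 𝒜‖ ^ 2
        ≤ (Fintype.card (Alphabet M 1) : ℝ)⁻¹ *
            ((Fintype.card (Alphabet M 1) : ℝ) * 4) :=
          mul_le_mul_of_nonneg_left hsum4 (by positivity)
      _ = 4 := by field_simp
      _ ≤ 32 / ((1 : ℕ) : ℝ) := by norm_num
  · -- main case A ≥ 2
    have hA2' : 2 ≤ A := hA2
    have hconv : ∑ 𝒜 : Alphabet M A, Complex.normSq (∑ a ∈ 𝒜.val, f a)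
        = ∑ s ∈ (univ : Finset (Fin M)).powersetCard A, Complex.normSq (∑ a ∈ s, f a) :=
      (Finset.sum_subtype _ (fun s => Finset.mem_powersetCard_univ)
        (fun s => Complex.normSq (∑ a ∈ s, f a))).symm
    have hkey := sum_normSq_le hA2' f hsum_f
    have hDb : ∑ a : Fin M, Complex.normSq (f a) ≤ 4 * M := by
      calc ∑ a : Fin M, Complex.normSq (f a) ≤ ∑ _a : Fin M, (4 : ℝ) :=
            Finset.sum_le_sum fun a _ => hnormSq4 a
        _ = 4 * M := by simp [Finset.card_univ, mul_comm]
    have hchain : ∑ 𝒜 : Alphabet M A, ‖Feta M A η 𝒜‖ ^ 2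
        ≤ ((A : ℝ)⁻¹) ^ 2 * (((M - 1).choose (A - 1) : ℝ) * (4 * M)) := by
      calc ∑ 𝒜 : Alphabet M A, ‖Feta M A η 𝒜‖ ^ 2
          = ∑ 𝒜 : Alphabet M A,
              ((A : ℝ)⁻¹) ^ 2 * Complex.normSq (∑ a ∈ 𝒜.val, f a) :=
            Finset.sum_congr rfl fun 𝒜 _ => hterm 𝒜
        _ = ((A : ℝ)⁻¹) ^ 2 * ∑ 𝒜 : Alphabet M A, Complex.normSq (∑ a ∈ 𝒜.val, f a) :=
            (Finset.mul_sum _ _ _).symm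
        _ ≤ ((A : ℝ)⁻¹) ^ 2 * (((M - 1).choose (A - 1) : ℝ) * (4 * M)) := by
            refine mul_le_mul_of_nonneg_left ?_ (by positivity)
            rw [hconv]
            refine hkey.trans ?_
            exact mul_le_mul_of_nonneg_left hDb (Nat.cast_nonneg _)
    have hid : M * (M - 1).choose (A - 1) = M.choose A * A := by
      have h := Nat.add_one_mul_choose_eq (M - 1) (A - 1)
      have e1 : M - 1 + 1 = M := by omega
      have e2 : A - 1 + 1 = A := by omega
      rw [e1, e2] at h
      exact h
    have hidR : (M : ℝ) * ((M - 1).choose (A - 1) : ℝ) = (M.choose A : ℝ) * A := by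
      exact_mod_cast hid
    have hfinal : (M.choose A : ℝ)⁻¹ *
        (((A : ℝ)⁻¹) ^ 2 * (((M - 1).choose (A - 1) : ℝ) * (4 * M))) = 4 / A := by
      have hNR : (M.choose A : ℝ) ≠ 0 := Nat.cast_ne_zero.mpr hNpos.ne'
      field_simp
      nlinarith [hidR]
    rw [hcard]
    calc (M.choose A : ℝ)⁻¹ * ∑ 𝒜 : Alphabet M A, ‖Feta M A η 𝒜‖ ^ 2
        ≤ (M.choose A : ℝ)⁻¹ *
            (((A : ℝ)⁻¹) ^ 2 * (((M - 1).choose (A - 1) : ℝ) * (4 * M))) :=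
          mul_le_mul_of_nonneg_left hchain (by positivity)
      _ = 4 / A := hfinal
      _ ≤ 32 / A := by gcongr <;> norm_num

end FUPRandom
end

section
/- For every j ≥ 2, every realization of the construction, and every ξ ∈ ℝ ∖ {0}, with η := ξ/M^j one has the exact identity ℱν_j(ξ) − ℱν_{j−1}(ξ) = [ i (e^{−iη} − 1) / (√(2π) η) ] · ( (1/A^{j−1}) ∑_{b∈B_{j−1}} e^{−iM^j η b} F_η(𝒜(b)) ). -/
open MeasureTheory Finset Filter Topology

namespace FUPRandom

section Aux

variable {M A : ℕ}

lemma digit_lt (𝒜 : Alphabet M A) (k : Fin A) : digit 𝒜 k < M :=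
  ((𝒜.val.orderIsoOfFin 𝒜.prop k : Fin M)).isLt

lemma digit_injective (𝒜 : Alphabet M A) : Function.Injective (digit 𝒜) := by
  intro k1 k2 h
  exact (𝒜.val.orderIsoOfFin 𝒜.prop).injective
    (Subtype.coe_injective (Fin.val_injective h))

lemma sum_digit (𝒜 : Alphabet M A) (f : ℕ → ℂ) :
    ∑ k : Fin A, f (digit 𝒜 k) = ∑ a ∈ 𝒜.val, f (a : ℕ) := by
  rw [← Finset.sum_coe_sort 𝒜.val (fun a => f (a : ℕ))]
  exact Fintype.sum_equiv (𝒜.val.orderIsoOfFin 𝒜.prop).toEquiv _ _ (fun k => rfl)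

/-- Integer numerator of a Cantor point. -/
def natPoint (M A : ℕ) (ω : Config M A) : (j : ℕ) → (Fin j → Fin A) → ℕ
  | 0, _ => 0
  | (j + 1), w =>
      M * natPoint M A ω j (fun i => w i.castSucc)
        + digit (ω j (finFunctionFinEquiv (fun i => w i.castSucc))) (w (Fin.last j))

lemma cantorPoint_eq_natPoint (hM : 0 < M) (ω : Config M A) (j : ℕ) (w : Fin j → Fin A) :
    cantorPoint M A ω j w = (natPoint M A ω j w : ℝ) / (M : ℝ) ^ j := by
  induction j with
  | zero => simp [cantorPoint, natPoint]
  | succ j ih =>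
      have hM' : (M : ℝ) ≠ 0 := Nat.cast_ne_zero.mpr hM.ne'
      rw [cantorPoint, natPoint, ih]
      push_cast
      field_simp
      ring

lemma natPoint_injective (hM : 0 < M) (ω : Config M A) (j : ℕ) :
    Function.Injective (natPoint M A ω j) := by
  induction j with
  | zero => intro w1 w2 _; funext i; exact i.elim0
  | succ j ih =>
      intro w1 w2 h
      rw [natPoint, natPoint] at h
      set n1 := natPoint M A ω j (fun i => w1 i.castSucc) with hn1
      set n2 := natPoint M A ω j (fun i => w2 i.castSucc) with hn2
      have hd1 := digit_lt (ω j (finFunctionFinEquiv (fun i => w1 i.castSucc))) (w1 (Fin.last j))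
      have hd2 := digit_lt (ω j (finFunctionFinEquiv (fun i => w2 i.castSucc))) (w2 (Fin.last j))
      have hn : n1 = n2 := by
        have := congrArg (· / M) h
        simpa [Nat.mul_add_div hM, Nat.div_eq_of_lt hd1, Nat.div_eq_of_lt hd2] using this
      have hpre : (fun i : Fin j => w1 i.castSucc) = (fun i : Fin j => w2 i.castSucc) := ih hn
      have hd : digit (ω j (finFunctionFinEquiv (fun i => w1 i.castSucc))) (w1 (Fin.last j))
          = digit (ω j (finFunctionFinEquiv (fun i => w1 i.castSucc))) (w2 (Fin.last j)) := by
        rw [hn] at h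
        have := Nat.add_left_cancel h
        rw [← hpre] at this
        exact this
      have hlast : w1 (Fin.last j) = w2 (Fin.last j) := digit_injective _ hd
      funext i
      refine Fin.lastCases ?_ ?_ i
      · exact hlast
      · intro i; exact congrFun hpre i

end Aux
section Aux2

variable {M A : ℕ}

lemma div_neg_I_mul (ξ : ℝ) (hξ : ξ ≠ 0) (z : ℂ) :
    z / (-(Complex.I * ξ)) = Complex.I * z / ξ := by
  have hξC : (ξ : ℂ) ≠ 0 := Complex.ofReal_ne_zero.mpr hξ
  have hd : -(Complex.I * (ξ : ℂ)) ≠ 0 := by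
    simp [Complex.I_ne_zero, hξC]
  rw [div_eq_div_iff hd hξC]
  linear_combination (z * (ξ:ℂ)) * Complex.I_sq

lemma integral_Icc_exp (ξ : ℝ) (hξ : ξ ≠ 0) (c h : ℝ) (hh : 0 ≤ h) :
    ∫ x in Set.Icc c (c + h), Complex.exp (-(Complex.I * x * ξ))
      = Complex.exp (-(Complex.I * c * ξ))
          * (Complex.I * (Complex.exp (-(Complex.I * h * ξ)) - 1) / ξ) := by
  have hne : -(Complex.I * (ξ : ℂ)) ≠ 0 := by
    simp [Complex.I_ne_zero, Complex.ofReal_ne_zero.mpr hξ]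
  have key : ∀ x : ℝ, -(Complex.I * x * ξ) = (-(Complex.I * ξ)) * (x : ℂ) := by
    intro x; ring
  rw [MeasureTheory.integral_Icc_eq_integral_Ioc,
    ← intervalIntegral.integral_of_le (by linarith : c ≤ c + h)]
  have hcongr : (∫ x in c..(c + h), Complex.exp (-(Complex.I * x * ξ)))
      = ∫ x in c..(c + h), Complex.exp ((-(Complex.I * ξ)) * (x : ℂ)) := by
    apply intervalIntegral.integral_congr
    intro x _
    simp only [key]
  rw [hcongr, integral_exp_mul_complex hne, div_neg_I_mul ξ hξ]
  have h1 : (-(Complex.I * ξ)) * ((c + h : ℝ) : ℂ)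
      = -(Complex.I * c * ξ) + -(Complex.I * h * ξ) := by push_cast; ring
  have h2 : (-(Complex.I * ξ)) * ((c : ℝ) : ℂ) = -(Complex.I * c * ξ) := by ring
  rw [h1, h2, Complex.exp_add]
  ring

lemma volume_inter_Icc_eq_zero (hM : 0 < M) (ω : Config M A) (n : ℕ)
    (w w' : Fin n → Fin A) (hww : w ≠ w') :
    volume (Set.Icc (cantorPoint M A ω n w) (cantorPoint M A ω n w + ((M : ℝ) ^ n)⁻¹)
      ∩ Set.Icc (cantorPoint M A ω n w') (cantorPoint M A ω n w' + ((M : ℝ) ^ n)⁻¹)) = 0 := by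
  have hMn : (0 : ℝ) < (M : ℝ) ^ n := by positivity
  rw [Set.Icc_inter_Icc, Real.volume_Icc, ENNReal.ofReal_eq_zero, sub_nonpos]
  rw [cantorPoint_eq_natPoint hM, cantorPoint_eq_natPoint hM]
  set n1 := natPoint M A ω n w
  set n2 := natPoint M A ω n w'
  have hne : n1 ≠ n2 := fun e => hww (natPoint_injective hM ω n e)
  have key : ∀ a b : ℕ, a < b →
      min ((a : ℝ) / (M : ℝ) ^ n + ((M : ℝ) ^ n)⁻¹) ((b : ℝ) / (M : ℝ) ^ n + ((M : ℝ) ^ n)⁻¹)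
        ≤ max ((a : ℝ) / (M : ℝ) ^ n) ((b : ℝ) / (M : ℝ) ^ n) := by
    intro a b hab
    refine le_trans (min_le_left _ _) (le_trans ?_ (le_max_right _ _))
    rw [div_add' _ _ _ hMn.ne', div_le_div_iff₀ hMn hMn]
    have hab' : (a : ℝ) + 1 ≤ b := by exact_mod_cast hab
    have hinv : ((M : ℝ) ^ n)⁻¹ * (M : ℝ) ^ n = 1 := inv_mul_cancel₀ hMn.ne'
    nlinarith
  rcases hne.lt_or_gt with hlt | hlt
  · exact key n1 n2 hlt
  · rw [min_comm, max_comm]; exact key n2 n1 hlt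

lemma fourier_iter (hM : 0 < M) (hA : 0 < A) (ω : Config M A) (n : ℕ) (ξ : ℝ) (hξ : ξ ≠ 0) :
    fourierMeasure (cantorMeasureIter M A ω n) ξ
      = (Real.sqrt (2 * Real.pi) : ℂ)⁻¹ * ((M : ℂ) ^ n / (A : ℂ) ^ n)
          * ∑ w : Fin n → Fin A,
              Complex.exp (-(Complex.I * (cantorPoint M A ω n w) * ξ))
                * (Complex.I * (Complex.exp (-(Complex.I * (((M : ℝ) ^ n)⁻¹ : ℝ) * ξ)) - 1) / ξ) := by
  have hcont : Continuous (fun x : ℝ => Complex.exp (-(Complex.I * x * ξ))) := by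
    fun_prop
  rw [fourierMeasure, cantorMeasureIter, integral_smul_measure, cantorIter]
  rw [MeasureTheory.integral_iUnion_ae
      (fun w => measurableSet_Icc.nullMeasurableSet)
      (fun w w' hww => volume_inter_Icc_eq_zero hM ω n w w' hww)
      ((hcont.continuousOn).integrableOn_compact
        (isCompact_iUnion (fun w => isCompact_Icc)))]
  rw [tsum_fintype]
  simp_rw [integral_Icc_exp ξ hξ _ _ (by positivity : (0:ℝ) ≤ ((M : ℝ) ^ n)⁻¹)]
  have htr : (((M : ENNReal) ^ n / (A : ENNReal) ^ n)).toReal = (M : ℝ) ^ n / (A : ℝ) ^ n := by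
    rw [ENNReal.toReal_div]; simp
  rw [htr, Complex.real_smul]
  push_cast
  ring

end Aux2
section Aux3

variable {M A : ℕ}

/-- The equivalence `(Fin n → Fin A) × Fin A ≃ (Fin (n+1) → Fin A)` by `snoc`. -/
def snocEquiv (A n : ℕ) : ((Fin n → Fin A) × Fin A) ≃ (Fin (n + 1) → Fin A) where
  toFun p := Fin.snoc p.1 p.2
  invFun w := (fun i => w i.castSucc, w (Fin.last n))
  left_inv p := by
    ext i
    · simp [Fin.snoc_castSucc]
    · simp [Fin.snoc_last]
  right_inv w := by
    funext i
    refine Fin.lastCases ?_ ?_ i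
    · simp [Fin.snoc_last]
    · intro i; simp [Fin.snoc_castSucc]

lemma sum_snoc_eq (A n : ℕ) (f : (Fin (n + 1) → Fin A) → ℂ) :
    ∑ w : Fin (n + 1) → Fin A, f w
      = ∑ w : Fin n → Fin A, ∑ a : Fin A, f (Fin.snoc w a) := by
  calc ∑ w : Fin (n + 1) → Fin A, f w
      = ∑ p : (Fin n → Fin A) × Fin A, f (Fin.snoc p.1 p.2) :=
        (Fintype.sum_equiv (snocEquiv A n) _ _ (fun p => rfl)).symm
    _ = ∑ w : Fin n → Fin A, ∑ a : Fin A, f (Fin.snoc w a) := Fintype.sum_prod_type _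

lemma cantorPoint_snoc (ω : Config M A) (n : ℕ) (w : Fin n → Fin A) (a : Fin A) :
    cantorPoint M A ω (n + 1) (Fin.snoc w a)
      = cantorPoint M A ω n w
          + (digit (ω n (finFunctionFinEquiv w)) a : ℝ) / (M : ℝ) ^ (n + 1) := by
  rw [cantorPoint]
  have h1 : (fun i : Fin n => (Fin.snoc w a : Fin (n+1) → Fin A) i.castSucc) = w := by
    funext i; simp [Fin.snoc_castSucc]
  rw [h1, Fin.snoc_last]

lemma geom_exp (η : ℝ) (m : ℕ) :
    Complex.exp (-(Complex.I * ((m : ℝ) * η))) - 1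
      = (∑ a ∈ Finset.range m, Complex.exp (-(Complex.I * (η : ℂ) * (a : ℕ))))
          * (Complex.exp (-(Complex.I * (η : ℂ))) - 1) := by
  have key : ∀ a : ℕ, Complex.exp (-(Complex.I * (η : ℂ) * (a : ℕ)))
      = Complex.exp (-(Complex.I * (η : ℂ))) ^ a := by
    intro a
    rw [← Complex.exp_nat_mul]
    congr 1
    push_cast
    ring
  simp_rw [key]
  rw [geom_sum_mul, ← Complex.exp_nat_mul]
  congr 2
  push_cast
  ring

end Aux3
set_option maxHeartbeats 1600000 in
lemma main_aux (M A : ℕ) (hM : 3 ≤ M) (hA1 : 1 ≤ A)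
    (ω : Config M A) (k : ℕ) (ξ : ℝ) (hξ : ξ ≠ 0) :
    fourierMeasure (cantorMeasureIter M A ω (k + 1)) ξ
        - fourierMeasure (cantorMeasureIter M A ω k) ξ
      = Complex.I * (Complex.exp (-(Complex.I * (ξ / (M : ℝ) ^ (k + 1)))) - 1)
          / ((Real.sqrt (2 * Real.pi) * (ξ / (M : ℝ) ^ (k + 1)) : ℝ) : ℂ)
        * (((A : ℂ) ^ k)⁻¹ *
            ∑ w : Fin k → Fin A,
              Complex.exp (-(Complex.I * ((M : ℝ) ^ (k + 1) * (ξ / (M : ℝ) ^ (k + 1)))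
                  * cantorPoint M A ω k w))
                * Feta M A (ξ / (M : ℝ) ^ (k + 1)) (ω k (finFunctionFinEquiv w))) := by
  have hMpos : 0 < M := by omega
  have hApos : 0 < A := hA1
  rw [fourier_iter hMpos hApos ω (k + 1) ξ hξ]
  rw [fourier_iter hMpos hApos ω k ξ hξ]
  rw [sum_snoc_eq]
  simp_rw [cantorPoint_snoc]
  rw [Finset.mul_sum]
  rw [Finset.mul_sum]
  rw [Finset.mul_sum]
  rw [← Finset.sum_sub_distrib]
  rw [Finset.mul_sum]
  refine Finset.sum_congr rfl fun w _ => ?_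
  set c := cantorPoint M A ω k w with hc
  set 𝒜 := ω k (finFunctionFinEquiv w) with h𝒜
  have hMR : (M : ℝ) ≠ 0 := Nat.cast_ne_zero.mpr hMpos.ne'
  have hsplit : ∀ x : Fin A,
      Complex.exp (-(Complex.I
            * ((c + (digit 𝒜 x : ℝ) / (M : ℝ) ^ (k + 1) : ℝ) : ℂ) * (ξ : ℂ)))
        = Complex.exp (-(Complex.I * (c : ℂ) * (ξ : ℂ)))
            * Complex.exp (-(Complex.I * ((ξ / (M : ℝ) ^ (k + 1) : ℝ) : ℂ)
                * ((digit 𝒜 x : ℕ) : ℂ))) := by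
    intro x
    rw [← Complex.exp_add]
    congr 1
    push_cast
    field_simp
    ring
  have hinner : (∑ x : Fin A,
        Complex.exp (-(Complex.I
              * ((c + (digit 𝒜 x : ℝ) / (M : ℝ) ^ (k + 1) : ℝ) : ℂ) * (ξ : ℂ)))
          * (Complex.I * (Complex.exp (-(Complex.I
              * (((((M : ℝ) ^ (k + 1))⁻¹ : ℝ)) : ℂ) * (ξ : ℂ))) - 1) / (ξ : ℂ)))
      = Complex.exp (-(Complex.I * (c : ℂ) * (ξ : ℂ)))
          * (Complex.I * (Complex.exp (-(Complex.I
              * (((((M : ℝ) ^ (k + 1))⁻¹ : ℝ)) : ℂ) * (ξ : ℂ))) - 1) / (ξ : ℂ))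
          * ∑ a ∈ 𝒜.val, Complex.exp (-(Complex.I * ((ξ / (M : ℝ) ^ (k + 1) : ℝ) : ℂ)
              * ((a : ℕ) : ℂ))) := by
    rw [← sum_digit 𝒜 (fun nn : ℕ => Complex.exp (-(Complex.I
        * ((ξ / (M : ℝ) ^ (k + 1) : ℝ) : ℂ) * (nn : ℂ))))]
    rw [Finset.mul_sum]
    refine Finset.sum_congr rfl fun x _ => ?_
    rw [hsplit x]
    ring
  rw [hinner]
  have hgeom : Complex.exp (-(Complex.I * ((((M : ℝ) ^ k)⁻¹ : ℝ) : ℂ) * (ξ : ℂ))) - 1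
      = (∑ a ∈ Finset.range M, Complex.exp (-(Complex.I
            * ((ξ / (M : ℝ) ^ (k + 1) : ℝ) : ℂ) * (a : ℕ))))
          * (Complex.exp (-(Complex.I * ((ξ / (M : ℝ) ^ (k + 1) : ℝ) : ℂ))) - 1) := by
    rw [← geom_exp (ξ / (M : ℝ) ^ (k + 1)) M]
    congr 2
    have hMC : ((M : ℕ) : ℂ) ≠ 0 := Nat.cast_ne_zero.mpr hMpos.ne'
    push_cast
    field_simp
    ring
  rw [hgeom]
  rw [Feta]
  have hMC : ((M : ℕ) : ℂ) ≠ 0 := Nat.cast_ne_zero.mpr hMpos.ne'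
  have hAC : ((A : ℕ) : ℂ) ≠ 0 := Nat.cast_ne_zero.mpr hApos.ne'
  have hξC : (ξ : ℂ) ≠ 0 := Complex.ofReal_ne_zero.mpr hξ
  have hsq : ((Real.sqrt (2 * Real.pi) : ℝ) : ℂ) ≠ 0 :=
    Complex.ofReal_ne_zero.mpr (Real.sqrt_ne_zero'.mpr (by positivity))
  have hD1 : Complex.exp (-(Complex.I * ((((M : ℝ) ^ (k + 1))⁻¹ : ℝ) : ℂ) * (ξ : ℂ)))
      = Complex.exp (-(Complex.I * ((ξ / (M : ℝ) ^ (k + 1) : ℝ) : ℂ))) := by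
    congr 1
    push_cast
    ring
  rw [hD1]
  have hE' : Complex.exp (-(Complex.I * ((((M : ℝ) : ℂ)) ^ (k + 1)
        * ((ξ : ℂ) / (((M : ℝ) : ℂ)) ^ (k + 1))) * (c : ℂ)))
      = Complex.exp (-(Complex.I * (c : ℂ) * (ξ : ℂ))) := by
    congr 1
    have hp : (((M : ℝ) : ℂ)) ^ (k + 1) ≠ 0 := by
      apply pow_ne_zero
      exact_mod_cast hMC
    field_simp
  rw [hE']
  have hs2 : ((Real.sqrt 2 : ℝ) : ℂ) ≠ 0 :=
    Complex.ofReal_ne_zero.mpr (Real.sqrt_ne_zero'.mpr (by norm_num))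
  have hsp : ((Real.sqrt Real.pi : ℝ) : ℂ) ≠ 0 :=
    Complex.ofReal_ne_zero.mpr (Real.sqrt_ne_zero'.mpr Real.pi_pos)
  push_cast
  field_simp [hMC, hAC, hξC, hs2, hsp]
  ring
/-- **Exact formula for consecutive differences of Fourier transforms.**
For `j ≥ 2`, every realization, and `ξ ≠ 0`, with `η = ξ/M^j`:
`ℱν_j(ξ) - ℱν_{j-1}(ξ)
  = [i(e^{-iη} - 1)/(√(2π)η)] · (A^{-(j-1)} ∑_{b ∈ B_{j-1}} e^{-iM^jηb} F_η(𝒜(b)))`. -/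
theorem fourier_cantorMeasureIter_succ_sub (M A : ℕ) (hM : 3 ≤ M) (hA1 : 1 ≤ A) (hAM : A ≤ M)
    (ω : Config M A) (j : ℕ) (hj : 2 ≤ j) (ξ : ℝ) (hξ : ξ ≠ 0) :
    fourierMeasure (cantorMeasureIter M A ω j) ξ
        - fourierMeasure (cantorMeasureIter M A ω (j - 1)) ξ
      = Complex.I * (Complex.exp (-(Complex.I * (ξ / (M : ℝ) ^ j))) - 1)
          / ((Real.sqrt (2 * Real.pi) * (ξ / (M : ℝ) ^ j) : ℝ) : ℂ)
        * (((A : ℂ) ^ (j - 1))⁻¹ *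
            ∑ w : Fin (j - 1) → Fin A,
              Complex.exp (-(Complex.I * ((M : ℝ) ^ j * (ξ / (M : ℝ) ^ j))
                  * cantorPoint M A ω (j - 1) w))
                * Feta M A (ξ / (M : ℝ) ^ j) (ω (j - 1) (finFunctionFinEquiv w))) := by
  obtain ⟨k, rfl⟩ : ∃ k, j = k + 1 := ⟨j - 1, by omega⟩
  exact main_aux M A hM hA1 ω k ξ hξ

end FUPRandom
end

section
/- Let 0 < δ < 1, 0 < ε < δ/2, M ≥ 3, and C₀ > 0. Let ν be a finite Borel measure supported in [0,1] such that ν(I) ≤ C₀|I|^δ for every interval I ⊆ ℝ and |ℱν(ξ)| ≤ C₀|ξ|^{−(δ−ε)/2} for all |ξ| ≥ M⁴. Then there is a constant C > 0, depending only on C₀, such that for all 0 < h ≤ M^{−8} the operator T : L²_ν(ℝ) → L²_ν(ℝ), Tu(ξ) = ∫_ℝ e^{−ixξ/h} u(x) dν(x), satisfies ‖T‖_{L²_ν(ℝ)→L²_ν(ℝ)} ≤ C h^{δ/4 − ε}. -/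
open MeasureTheory Finset Filter Topology

namespace FUPRandom

section FUPAux

open Set

noncomputable def Kker (ν : Measure ℝ) (h x y : ℝ) : ℂ :=
  (Real.sqrt (2 * Real.pi) : ℂ) * fourierMeasure ν ((x - y) / h)

lemma sqrt_two_pi_pos : 0 < Real.sqrt (2 * Real.pi) :=
  Real.sqrt_pos.2 (by positivity)

lemma sqrt_two_pi_le_three : Real.sqrt (2 * Real.pi) ≤ 3 := by
  rw [show (3:ℝ) = Real.sqrt 9 by
    rw [show (9:ℝ) = 3 ^ 2 by norm_num, Real.sqrt_sq (by norm_num)]]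
  exact Real.sqrt_le_sqrt (by nlinarith [Real.pi_le_four])

lemma Kker_eq (ν : Measure ℝ) (h x y : ℝ) :
    Kker ν h x y = ∫ ξ : ℝ, Complex.exp (-(Complex.I * ξ * (((x - y) / h : ℝ) : ℂ))) ∂ν := by
  rw [Kker, fourierMeasure, ← mul_assoc, mul_inv_cancel₀, one_mul]
  exact_mod_cast Complex.ofReal_ne_zero.2 sqrt_two_pi_pos.ne'

lemma norm_exp_I_mul (ξ c : ℝ) : ‖Complex.exp (-(Complex.I * (ξ:ℂ) * (c:ℂ)))‖ = 1 := by
  rw [Complex.norm_exp]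
  simp [Complex.mul_re]

lemma enorm_Kker_le (ν : Measure ℝ) (h x y : ℝ) :
    (‖Kker ν h x y‖₊ : ENNReal) ≤ ν Set.univ := by
  rw [Kker_eq]
  refine le_trans (enorm_integral_le_lintegral_enorm _) ?_
  have : ∀ ξ : ℝ, (‖Complex.exp (-(Complex.I * (ξ:ℂ) * (((x - y)/h : ℝ):ℂ)))‖₊ : ENNReal) = 1 := by
    intro ξ
    rw [show ((‖Complex.exp (-(Complex.I * (ξ:ℂ) * (((x - y)/h : ℝ):ℂ)))‖₊ : ENNReal))
        = ENNReal.ofReal ‖Complex.exp (-(Complex.I * (ξ:ℂ) * (((x - y)/h : ℝ):ℂ)))‖ from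
        (ofReal_norm _).symm, norm_exp_I_mul]
    simp
  calc ∫⁻ ξ, (‖Complex.exp (-(Complex.I * (ξ:ℂ) * (((x - y)/h : ℝ):ℂ)))‖₊ : ENNReal) ∂ν
      = ∫⁻ _, 1 ∂ν := lintegral_congr this
    _ = ν Set.univ := lintegral_one
    _ ≤ ν Set.univ := le_rfl

lemma norm_Kker_symm (ν : Measure ℝ) (h x y : ℝ) :
    ‖Kker ν h x y‖ = ‖Kker ν h y x‖ := by
  have hconj : Kker ν h y x = (starRingEnd ℂ) (Kker ν h x y) := by
    rw [Kker_eq, Kker_eq, ← integral_conj]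
    refine integral_congr_ae (Filter.Eventually.of_forall fun ξ => ?_)
    simp only
    rw [← Complex.exp_conj]
    congr 1
    rw [map_neg, map_mul, map_mul, Complex.conj_I, Complex.conj_ofReal, Complex.conj_ofReal]
    push_cast
    ring
  rw [hconj, RCLike.norm_conj]

lemma tail_bound_s14 {ν : Measure ℝ} {C₀ δ β : ℝ} (hC₀ : 0 < C₀) (hδ1 : δ ≤ 1)
    (hβ : 0 < β) (h2β : 2 * β ≤ δ)
    (hreg : ∀ a b : ℝ, a ≤ b → ν (Set.Icc a b) ≤ ENNReal.ofReal (C₀ * (b - a) ^ δ))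
    (hν1 : ν Set.univ ≤ ENNReal.ofReal C₀) (x : ℝ) :
    ∫⁻ y, ENNReal.ofReal (|x - y| ^ (-β)) ∂ν ≤ ENNReal.ofReal (3 * C₀) := by
  have hδ : 0 < δ := lt_of_lt_of_le (by positivity) h2β
  have hq2 : (2 : ℝ) ≤ δ / β := (le_div_iff₀ hβ).2 (by linarith)
  have hq : -(δ / β) < -1 := by linarith
  have h_meas : Measurable fun y : ℝ => |x - y| ^ (-β) := by fun_prop
  have h_nn : 0 ≤ᵐ[ν] fun y : ℝ => |x - y| ^ (-β) :=
    Filter.Eventually.of_forall fun y => Real.rpow_nonneg (abs_nonneg _) _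
  rw [lintegral_eq_lintegral_meas_lt ν h_nn h_meas.aemeasurable]
  have hsplit : Set.Ioc (0:ℝ) 1 ∪ Set.Ioi 1 = Set.Ioi 0 := Ioc_union_Ioi_eq_Ioi zero_le_one
  rw [← hsplit, lintegral_union measurableSet_Ioi Ioc_disjoint_Ioi_same]
  have piece1 : ∫⁻ t in Set.Ioc (0:ℝ) 1, ν {a | t < |x - a| ^ (-β)} ≤ ENNReal.ofReal C₀ := by
    calc ∫⁻ t in Set.Ioc (0:ℝ) 1, ν {a | t < |x - a| ^ (-β)}
        ≤ ∫⁻ _ in Set.Ioc (0:ℝ) 1, ENNReal.ofReal C₀ :=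
          setLIntegral_mono' measurableSet_Ioc fun t _ =>
            le_trans (measure_mono (subset_univ _)) hν1
      _ = ENNReal.ofReal C₀ := by
          rw [setLIntegral_const, Real.volume_Ioc]
          norm_num
  have piece2 : ∫⁻ t in Set.Ioi (1:ℝ), ν {a | t < |x - a| ^ (-β)} ≤ ENNReal.ofReal (2 * C₀) := by
    have hptwise : ∀ t ∈ Set.Ioi (1:ℝ), ν {a | t < |x - a| ^ (-β)}
        ≤ ENNReal.ofReal (2 * C₀ * t ^ (-(δ / β))) := by
      intro t ht
      have ht0 : (0:ℝ) < t := lt_trans zero_lt_one ht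
      set s : ℝ := t ^ (-(1/β)) with hs_def
      have hs0 : 0 < s := Real.rpow_pos_of_pos ht0 _
      have hsub : {a : ℝ | t < |x - a| ^ (-β)} ⊆ Set.Icc (x - s) (x + s) := by
        intro a ha
        simp only [mem_setOf_eq] at ha
        have habs : 0 ≤ |x - a| := abs_nonneg _
        have hapos : 0 < |x - a| := by
          rcases lt_or_eq_of_le habs with h' | h'
          · exact h'
          · exfalso
            rw [← h', Real.zero_rpow (by linarith : -β ≠ 0)] at ha
            linarith
        have hts : s ^ (-β) = t := by
          rw [hs_def, ← Real.rpow_mul ht0.le]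
          rw [show -(1/β) * -β = 1 by field_simp, Real.rpow_one]
        have : |x - a| < s := by
          have h2 : s ^ (-β) < |x - a| ^ (-β) := by rw [hts]; exact ha
          exact (Real.rpow_lt_rpow_iff_of_neg hs0 hapos (by linarith : -β < 0)).1 h2
        have := abs_lt.1 this
        constructor <;> linarith [this.1, this.2]
      calc ν {a : ℝ | t < |x - a| ^ (-β)} ≤ ν (Set.Icc (x - s) (x + s)) := measure_mono hsub
        _ ≤ ENNReal.ofReal (C₀ * (x + s - (x - s)) ^ δ) := hreg _ _ (by linarith)
        _ ≤ ENNReal.ofReal (2 * C₀ * t ^ (-(δ / β))) := by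
            apply ENNReal.ofReal_le_ofReal
            have h2s : x + s - (x - s) = 2 * s := by ring
            rw [h2s]
            have hsd : (2 * s) ^ δ = 2 ^ δ * s ^ δ := Real.mul_rpow (by norm_num) hs0.le
            have h2d : (2:ℝ) ^ δ ≤ 2 := by
              calc (2:ℝ) ^ δ ≤ 2 ^ (1:ℝ) :=
                    Real.rpow_le_rpow_of_exponent_le one_le_two hδ1
                _ = 2 := Real.rpow_one 2
            have hsd2 : s ^ δ = t ^ (-(δ/β)) := by
              rw [hs_def, ← Real.rpow_mul ht0.le]
              congr 1
              field_simp
            rw [hsd, hsd2]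
            have ht' : 0 ≤ t ^ (-(δ/β)) := Real.rpow_nonneg ht0.le _
            nlinarith [mul_le_mul_of_nonneg_right h2d ht', hC₀.le]
    calc ∫⁻ t in Set.Ioi (1:ℝ), ν {a | t < |x - a| ^ (-β)}
        ≤ ∫⁻ t in Set.Ioi (1:ℝ), ENNReal.ofReal (2 * C₀ * t ^ (-(δ / β))) :=
          setLIntegral_mono' measurableSet_Ioi hptwise
      _ = ENNReal.ofReal (∫ t in Set.Ioi (1:ℝ), 2 * C₀ * t ^ (-(δ / β))) := by
          rw [← ofReal_integral_eq_lintegral_ofReal]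
          · exact (integrableOn_Ioi_rpow_of_lt hq one_pos).const_mul _
          · filter_upwards [self_mem_ae_restrict
              (measurableSet_Ioi : MeasurableSet (Set.Ioi (1:ℝ)))] with t ht
            have ht0 : (0:ℝ) < t := lt_trans zero_lt_one ht
            have : (0:ℝ) ≤ 2 * C₀ * t ^ (-(δ / β)) := by positivity
            simpa using this
      _ ≤ ENNReal.ofReal (2 * C₀) := by
          apply ENNReal.ofReal_le_ofReal
          rw [MeasureTheory.integral_const_mul, integral_Ioi_rpow_of_lt hq one_pos]
          rw [Real.one_rpow]
          have heq : -1 / (-(δ/β) + 1) = 1 / (δ/β - 1) := by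
            rw [div_eq_div_iff] <;> [skip; linarith; linarith]
            ring
          have : -1 / (-(δ/β) + 1) ≤ 1 := by
            rw [heq, div_le_one (by linarith)]
            linarith
          have h1 : 0 ≤ -1 / (-(δ/β) + 1) := by rw [heq]; exact div_nonneg zero_le_one (by linarith)
          nlinarith [this, h1, hC₀.le]
  calc _ ≤ ENNReal.ofReal C₀ + ENNReal.ofReal (2 * C₀) := add_le_add piece1 piece2
    _ = ENNReal.ofReal (3 * C₀) := by rw [← ENNReal.ofReal_add (by positivity) (by positivity)]; ring_nf

lemma schur_row {ν : Measure ℝ} {C₀ δ ε : ℝ} {M : ℕ} (hC₀ : 0 < C₀)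
    (hδ : 0 < δ) (hδ1 : δ < 1) (hε : 0 < ε) (hεδ : ε < δ / 2) (hM : 3 ≤ M)
    (hreg : ∀ a b : ℝ, a ≤ b → ν (Set.Icc a b) ≤ ENNReal.ofReal (C₀ * (b - a) ^ δ))
    (hν1 : ν Set.univ ≤ ENNReal.ofReal C₀)
    (hdecay : ∀ ξ : ℝ, (M : ℝ) ^ 4 ≤ |ξ| →
      ‖fourierMeasure ν ξ‖ ≤ C₀ * |ξ| ^ (-(δ - ε) / 2))
    {h : ℝ} (hh0 : 0 < h) (hhM : h ≤ (M : ℝ) ^ (-8 : ℤ)) (x : ℝ) :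
    ∫⁻ y, (‖Kker ν h x y‖₊ : ENNReal) ∂ν
      ≤ ENNReal.ofReal (11 * C₀ ^ 2 * h ^ (δ / 2 - 2 * ε)) := by
  have hM3 : (3:ℝ) ≤ (M:ℝ) := by exact_mod_cast hM
  have hM0 : (0:ℝ) < (M:ℝ) := by linarith
  set β : ℝ := (δ - ε) / 2 with hβ_def
  have hβ0 : 0 < β := by rw [hβ_def]; linarith
  have h2β : 2 * β ≤ δ := by rw [hβ_def]; linarith
  -- h ≤ 1
  have hMz : ((M:ℝ)) ^ (-8:ℤ) = ((M:ℝ) ^ (8:ℕ))⁻¹ := by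
    rw [zpow_neg]; norm_cast
  have h1 : h ≤ 1 := by
    refine le_trans hhM ?_
    rw [hMz]
    have h8 : (1:ℝ) ≤ (M:ℝ) ^ (8:ℕ) := one_le_pow₀ (by linarith)
    exact inv_le_one_of_one_le₀ h8
  set r : ℝ := h ^ ((1:ℝ)/2) with hr_def
  have hr0 : 0 < r := Real.rpow_pos_of_pos hh0 _
  -- M^4 ≤ r / h
  have hrh : (M:ℝ) ^ 4 ≤ r / h := by
    have hcast : ((M:ℝ)) ^ (-8:ℤ) = (M:ℝ) ^ (-8:ℝ) := by
      rw [← Real.rpow_intCast]; norm_num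
    have key : h ^ ((1:ℝ)/2) ≤ (M:ℝ) ^ (-4:ℝ) := by
      calc h ^ ((1:ℝ)/2) ≤ ((M:ℝ) ^ (-8:ℝ)) ^ ((1:ℝ)/2) := by
            apply Real.rpow_le_rpow hh0.le _ (by norm_num)
            rw [← hcast]; exact hhM
        _ = (M:ℝ) ^ (-4:ℝ) := by
            rw [← Real.rpow_mul hM0.le]; norm_num
    have hM4 : ((M:ℝ) ^ (-4:ℝ))⁻¹ = (M:ℝ) ^ 4 := by
      rw [Real.rpow_neg hM0.le, inv_inv]
      rw [show (4:ℝ) = ((4:ℕ):ℝ) by norm_num, Real.rpow_natCast]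
    have hinv : (h ^ ((1:ℝ)/2))⁻¹ = h ^ (-((1:ℝ)/2)) :=
      (Real.rpow_neg hh0.le _).symm
    have hrdiv : r / h = h ^ (-((1:ℝ)/2)) := by
      rw [hr_def, div_eq_mul_inv, ← Real.rpow_neg_one h, ← Real.rpow_add hh0]
      norm_num
    rw [hrdiv, ← hinv, ← hM4]
    exact inv_anti₀ (Real.rpow_pos_of_pos hh0 _) key
  -- pointwise off-diagonal bound
  have hpoint : ∀ y : ℝ, r ≤ |x - y| →
      ‖Kker ν h x y‖ ≤ 3 * C₀ * h ^ β * |x - y| ^ (-β) := by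
    intro y hy
    have haxy : 0 < |x - y| := lt_of_lt_of_le hr0 hy
    have hξ : (M:ℝ) ^ 4 ≤ |(x - y) / h| := by
      rw [abs_div, abs_of_pos hh0]
      refine le_trans hrh ?_
      gcongr
    have hdec := hdecay _ hξ
    have hKnorm : ‖Kker ν h x y‖
        = Real.sqrt (2 * Real.pi) * ‖fourierMeasure ν ((x - y) / h)‖ := by
      rw [Kker, norm_mul, Complex.norm_real, Real.norm_eq_abs,
        abs_of_pos sqrt_two_pi_pos]
    have hrw : |(x - y) / h| ^ (-(δ - ε) / 2) = |x - y| ^ (-β) * h ^ β := by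
      rw [show (-(δ - ε) / 2 : ℝ) = -β by rw [hβ_def]; ring]
      rw [abs_div, abs_of_pos hh0, Real.div_rpow (abs_nonneg _) hh0.le,
        Real.rpow_neg hh0.le, div_eq_mul_inv, inv_inv]
    calc ‖Kker ν h x y‖
        = Real.sqrt (2 * Real.pi) * ‖fourierMeasure ν ((x - y) / h)‖ := hKnorm
      _ ≤ 3 * (C₀ * |(x - y) / h| ^ (-(δ - ε) / 2)) := by
          apply mul_le_mul sqrt_two_pi_le_three hdec (norm_nonneg _) (by norm_num)
      _ = 3 * C₀ * h ^ β * |x - y| ^ (-β) := by rw [hrw]; ring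
  -- split the integral
  have hsplit := lintegral_add_compl (μ := ν) (fun y => (‖Kker ν h x y‖₊ : ENNReal))
    (measurableSet_closedBall : MeasurableSet (Metric.closedBall x r))
  have hdiag : ∫⁻ y in Metric.closedBall x r, (‖Kker ν h x y‖₊ : ENNReal) ∂ν
      ≤ ENNReal.ofReal (2 * C₀ ^ 2 * h ^ (δ / 2)) := by
    have hptC : ∀ y ∈ Metric.closedBall x r, (‖Kker ν h x y‖₊ : ENNReal) ≤ ENNReal.ofReal C₀ :=
      fun y _ => le_trans (enorm_Kker_le ν h x y) hν1
    calc ∫⁻ y in Metric.closedBall x r, (‖Kker ν h x y‖₊ : ENNReal) ∂ν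
        ≤ ∫⁻ _ in Metric.closedBall x r, ENNReal.ofReal C₀ ∂ν :=
          setLIntegral_mono' measurableSet_closedBall hptC
      _ = ENNReal.ofReal C₀ * ν (Metric.closedBall x r) := setLIntegral_const _ _
      _ ≤ ENNReal.ofReal C₀ * ENNReal.ofReal (C₀ * (2 * r) ^ δ) := by
          apply mul_le_mul_right
          rw [Real.closedBall_eq_Icc]
          have := hreg (x - r) (x + r) (by linarith)
          rwa [show x + r - (x - r) = 2 * r by ring] at this
      _ = ENNReal.ofReal (C₀ * (C₀ * (2 * r) ^ δ)) := by
          rw [← ENNReal.ofReal_mul hC₀.le]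
      _ ≤ ENNReal.ofReal (2 * C₀ ^ 2 * h ^ (δ / 2)) := by
          apply ENNReal.ofReal_le_ofReal
          have h2r : (2 * r) ^ δ = 2 ^ δ * r ^ δ := Real.mul_rpow (by norm_num) hr0.le
          have h2d : (2:ℝ) ^ δ ≤ 2 := by
            calc (2:ℝ) ^ δ ≤ 2 ^ (1:ℝ) :=
                  Real.rpow_le_rpow_of_exponent_le one_le_two hδ1.le
              _ = 2 := Real.rpow_one 2
          have hrδ : r ^ δ = h ^ (δ / 2) := by
            rw [hr_def, ← Real.rpow_mul hh0.le]
            congr 1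
            ring
          have hrδ0 : 0 ≤ h ^ (δ / 2) := Real.rpow_nonneg hh0.le _
          rw [h2r, hrδ]
          nlinarith [mul_le_mul_of_nonneg_right h2d hrδ0, hC₀.le, sq_nonneg C₀]
  have hoff : ∫⁻ y in (Metric.closedBall x r)ᶜ, (‖Kker ν h x y‖₊ : ENNReal) ∂ν
      ≤ ENNReal.ofReal (9 * C₀ ^ 2 * h ^ β) := by
    have hconst : (0:ℝ) ≤ 3 * C₀ * h ^ β := by positivity
    calc ∫⁻ y in (Metric.closedBall x r)ᶜ, (‖Kker ν h x y‖₊ : ENNReal) ∂ν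
        ≤ ∫⁻ y in (Metric.closedBall x r)ᶜ,
            ENNReal.ofReal (3 * C₀ * h ^ β) * ENNReal.ofReal (|x - y| ^ (-β)) ∂ν := by
          refine setLIntegral_mono' measurableSet_closedBall.compl fun y hy => ?_
          have hy' : r ≤ |x - y| := by
            have : r < dist y x := by
              simpa [Metric.mem_closedBall, not_le] using hy
            rw [Real.dist_eq, abs_sub_comm] at this
            exact this.le
          rw [← enorm_eq_nnnorm, ← ofReal_norm, ← ENNReal.ofReal_mul hconst]
          exact ENNReal.ofReal_le_ofReal (hpoint y hy')
      _ ≤ ∫⁻ y, ENNReal.ofReal (3 * C₀ * h ^ β) * ENNReal.ofReal (|x - y| ^ (-β)) ∂ν :=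
          setLIntegral_le_lintegral _ _
      _ = ENNReal.ofReal (3 * C₀ * h ^ β) * ∫⁻ y, ENNReal.ofReal (|x - y| ^ (-β)) ∂ν :=
          lintegral_const_mul' _ _ ENNReal.ofReal_ne_top
      _ ≤ ENNReal.ofReal (3 * C₀ * h ^ β) * ENNReal.ofReal (3 * C₀) :=
          mul_le_mul_right (tail_bound_s14 hC₀ hδ1.le hβ0 h2β hreg hν1 x) _
      _ = ENNReal.ofReal (9 * C₀ ^ 2 * h ^ β) := by
          rw [← ENNReal.ofReal_mul hconst]
          congr 1
          ring
  calc ∫⁻ y, (‖Kker ν h x y‖₊ : ENNReal) ∂ν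
      = (∫⁻ y in Metric.closedBall x r, (‖Kker ν h x y‖₊ : ENNReal) ∂ν)
        + ∫⁻ y in (Metric.closedBall x r)ᶜ, (‖Kker ν h x y‖₊ : ENNReal) ∂ν := hsplit.symm
    _ ≤ ENNReal.ofReal (2 * C₀ ^ 2 * h ^ (δ / 2)) + ENNReal.ofReal (9 * C₀ ^ 2 * h ^ β) :=
        add_le_add hdiag hoff
    _ = ENNReal.ofReal (2 * C₀ ^ 2 * h ^ (δ / 2) + 9 * C₀ ^ 2 * h ^ β) := by
        rw [← ENNReal.ofReal_add (by positivity) (by positivity)]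
    _ ≤ ENNReal.ofReal (11 * C₀ ^ 2 * h ^ (δ / 2 - 2 * ε)) := by
        apply ENNReal.ofReal_le_ofReal
        have e1 : h ^ (δ / 2) ≤ h ^ (δ / 2 - 2 * ε) :=
          Real.rpow_le_rpow_of_exponent_ge hh0 h1 (by linarith)
        have e2 : h ^ β ≤ h ^ (δ / 2 - 2 * ε) :=
          Real.rpow_le_rpow_of_exponent_ge hh0 h1 (by rw [hβ_def]; linarith)
        nlinarith [sq_nonneg C₀, mul_le_mul_of_nonneg_left e1 (by positivity : (0:ℝ) ≤ 2 * C₀ ^ 2),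
          mul_le_mul_of_nonneg_left e2 (by positivity : (0:ℝ) ≤ 9 * C₀ ^ 2)]

end FUPAux

/-- **From Fourier decay to the FUP for measures.**
Let `0 < δ < 1`, `0 < ε < δ/2`, `M ≥ 3`, `C₀ > 0`. If `ν` is a finite Borel
measure supported in `[0,1]` with `ν(I) ≤ C₀|I|^δ` for every interval `I` and
`|ℱν(ξ)| ≤ C₀|ξ|^{-(δ-ε)/2}` for `|ξ| ≥ M⁴`, then there is `C > 0` depending
only on `C₀` such that for all `0 < h ≤ M^{-8}` the operator
`Tu(ξ) = ∫ e^{-ixξ/h} u(x) dν(x)` satisfies `‖T‖_{L²_ν → L²_ν} ≤ C h^{δ/4-ε}`. -/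
theorem fup_from_fourier_decay :
    ∀ C₀ : ℝ, 0 < C₀ →
      ∃ C : ℝ, 0 < C ∧
        ∀ (δ ε : ℝ) (M : ℕ), 0 < δ → δ < 1 → 0 < ε → ε < δ / 2 → 3 ≤ M →
          ∀ ν : Measure ℝ, IsFiniteMeasure ν →
            ν (Set.Icc (0 : ℝ) 1)ᶜ = 0 →
            (∀ a b : ℝ, a ≤ b →
              ν (Set.Icc a b) ≤ ENNReal.ofReal (C₀ * (b - a) ^ δ)) →
            (∀ ξ : ℝ, (M : ℝ) ^ 4 ≤ |ξ| →
              ‖fourierMeasure ν ξ‖ ≤ C₀ * |ξ| ^ (-(δ - ε) / 2)) →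
            ∀ h : ℝ, 0 < h → h ≤ (M : ℝ) ^ (-8 : ℤ) →
              ∀ u : ℝ → ℂ, MemLp u 2 ν →
                eLpNorm
                    (fun ξ : ℝ => ∫ x, Complex.exp (-(Complex.I * x * ξ / h)) * u x ∂ν) 2 ν
                  ≤ ENNReal.ofReal (C * h ^ (δ / 4 - ε)) * eLpNorm u 2 ν := by
  intro C₀ hC₀
  refine ⟨4 * (C₀ + 1), by positivity, ?_⟩
  intro δ ε M hδ hδ1 hε hεδ hM ν hfin hsupp hreg hdecay h hh0 hhM u hu
  haveI := hfin
  -- total mass bound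
  have hν1 : ν Set.univ ≤ ENNReal.ofReal C₀ := by
    have hcompl := measure_add_measure_compl (μ := ν)
      (measurableSet_Icc : MeasurableSet (Set.Icc (0:ℝ) 1))
    rw [hsupp, add_zero] at hcompl
    rw [← hcompl]
    have h01 := hreg 0 1 zero_le_one
    simpa [Real.one_rpow] using h01
  -- measurable representative
  obtain ⟨v, hv_sm, huv⟩ : ∃ v : ℝ → ℂ, StronglyMeasurable v ∧ u =ᵐ[ν] v :=
    ⟨hu.1.mk u, hu.1.stronglyMeasurable_mk, hu.1.ae_eq_mk⟩
  have hvL2 : MemLp v 2 ν := hu.ae_eq huv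
  have hTeq : (fun ξ : ℝ => ∫ x, Complex.exp (-(Complex.I * x * ξ / h)) * u x ∂ν)
      = fun ξ : ℝ => ∫ x, Complex.exp (-(Complex.I * x * ξ / h)) * v x ∂ν := by
    funext ξ
    exact integral_congr_ae (huv.mono fun x hx => by dsimp only; rw [hx])
  rw [hTeq, eLpNorm_congr_ae huv]
  set T : ℝ → ℂ := fun ξ : ℝ => ∫ x, Complex.exp (-(Complex.I * x * ξ / h)) * v x ∂ν
    with hT_def
  -- basic facts about v
  have hv1 : Integrable v ν := hvL2.integrable one_le_two
  set c₁ : ℝ := ∫ x, ‖v x‖ ∂ν with hc₁_def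
  have hc₁0 : 0 ≤ c₁ := integral_nonneg fun x => norm_nonneg _
  have hnorm_exp : ∀ a b : ℝ, ‖Complex.exp (-(Complex.I * (a:ℂ) * (b:ℂ) / (h:ℂ)))‖ = 1 := by
    intro a b
    rw [Complex.norm_exp]
    have : (-(Complex.I * (a:ℂ) * (b:ℂ) / (h:ℂ))).re = 0 := by
      simp [Complex.div_re, Complex.mul_re, Complex.mul_im]
    rw [this, Real.exp_zero]
  have hTb : ∀ ξ : ℝ, ‖T ξ‖ ≤ c₁ := by
    intro ξ
    refine le_trans (norm_integral_le_integral_norm _) (le_of_eq ?_)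
    refine integral_congr_ae (Filter.Eventually.of_forall fun x => ?_)
    dsimp only
    rw [norm_mul, hnorm_exp, one_mul]
  -- strong measurability of T
  have hT_sm : StronglyMeasurable T := by
    have hcont : Continuous fun q : ℝ × ℝ =>
        Complex.exp (-(Complex.I * (q.2:ℂ) * (q.1:ℂ) / (h:ℂ))) := by fun_prop
    exact (hcont.stronglyMeasurable.mul
      (hv_sm.comp_measurable measurable_snd)).integral_prod_right'
  -- strong measurability of the kernel
  have hK_sm : StronglyMeasurable fun p : ℝ × ℝ => Kker ν h p.1 p.2 := by
    have : (fun p : ℝ × ℝ => Kker ν h p.1 p.2)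
        = fun p : ℝ × ℝ =>
          ∫ ξ : ℝ, Complex.exp (-(Complex.I * ξ * (((p.1 - p.2) / h : ℝ) : ℂ))) ∂ν :=
      funext fun p => Kker_eq ν h p.1 p.2
    rw [this]
    have hcont : Continuous fun q : (ℝ × ℝ) × ℝ =>
        Complex.exp (-(Complex.I * (q.2:ℂ) * (((q.1.1 - q.1.2) / h : ℝ) : ℂ))) := by fun_prop
    exact hcont.stronglyMeasurable.integral_prod_right'
  -- the exponential product identity
  have hEprod : ∀ x y ξ : ℝ,
      Complex.exp (-(Complex.I * (x:ℂ) * (ξ:ℂ) / (h:ℂ)))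
        * (starRingEnd ℂ) (Complex.exp (-(Complex.I * (y:ℂ) * (ξ:ℂ) / (h:ℂ))))
      = Complex.exp (-(Complex.I * (ξ:ℂ) * (((x - y) / h : ℝ) : ℂ))) := by
    intro x y ξ
    rw [← Complex.exp_conj, ← Complex.exp_add]
    congr 1
    rw [map_neg, map_div₀, map_mul, map_mul, Complex.conj_I, Complex.conj_ofReal,
      Complex.conj_ofReal, Complex.conj_ofReal]
    push_cast
    ring
  -- expand the square
  have hstep1 : ∀ ξ : ℝ, T ξ * (starRingEnd ℂ) (T ξ)
      = ∫ p : ℝ × ℝ,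
          (Complex.exp (-(Complex.I * (p.1:ℂ) * (ξ:ℂ) / (h:ℂ))) * v p.1)
            * (starRingEnd ℂ) (Complex.exp (-(Complex.I * (p.2:ℂ) * (ξ:ℂ) / (h:ℂ))) * v p.2)
          ∂(ν.prod ν) := by
    intro ξ
    rw [hT_def]
    dsimp only
    rw [← integral_conj, ← integral_prod_mul]
  -- integrability on the triple product
  have hFint : Integrable (Function.uncurry fun (ξ : ℝ) (p : ℝ × ℝ) =>
      (Complex.exp (-(Complex.I * (p.1:ℂ) * (ξ:ℂ) / (h:ℂ))) * v p.1)
        * (starRingEnd ℂ) (Complex.exp (-(Complex.I * (p.2:ℂ) * (ξ:ℂ) / (h:ℂ))) * v p.2))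
      (ν.prod (ν.prod ν)) := by
    have hsm : AEStronglyMeasurable (Function.uncurry fun (ξ : ℝ) (p : ℝ × ℝ) =>
        (Complex.exp (-(Complex.I * (p.1:ℂ) * (ξ:ℂ) / (h:ℂ))) * v p.1)
          * (starRingEnd ℂ) (Complex.exp (-(Complex.I * (p.2:ℂ) * (ξ:ℂ) / (h:ℂ))) * v p.2))
        (ν.prod (ν.prod ν)) := by
      have hc1 : Continuous fun q : ℝ × ℝ × ℝ =>
          Complex.exp (-(Complex.I * (q.2.1:ℂ) * (q.1:ℂ) / (h:ℂ))) := by fun_prop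
      have hc2' : Continuous fun q : ℝ × ℝ × ℝ =>
          Complex.exp (-(Complex.I * (q.2.2:ℂ) * (q.1:ℂ) / (h:ℂ))) := by fun_prop
      have hc2 : Continuous fun q : ℝ × ℝ × ℝ =>
          (starRingEnd ℂ) (Complex.exp (-(Complex.I * (q.2.2:ℂ) * (q.1:ℂ) / (h:ℂ)))) :=
        (continuous_star : Continuous (star : ℂ → ℂ)).comp hc2'
      have hm1 : StronglyMeasurable fun q : ℝ × ℝ × ℝ => v q.2.1 :=
        hv_sm.comp_measurable (measurable_snd.fst)
      have hm2 : StronglyMeasurable fun q : ℝ × ℝ × ℝ => v q.2.2 :=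
        hv_sm.comp_measurable (measurable_snd.snd)
      have hm2' : StronglyMeasurable fun q : ℝ × ℝ × ℝ => (starRingEnd ℂ) (v q.2.2) :=
        (continuous_star : Continuous (star : ℂ → ℂ)).comp_stronglyMeasurable hm2
      have : StronglyMeasurable fun q : ℝ × ℝ × ℝ =>
          (Complex.exp (-(Complex.I * (q.2.1:ℂ) * (q.1:ℂ) / (h:ℂ))) * v q.2.1)
            * ((starRingEnd ℂ) (Complex.exp (-(Complex.I * (q.2.2:ℂ) * (q.1:ℂ) / (h:ℂ))))
              * (starRingEnd ℂ) (v q.2.2)) :=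
        ((hc1.stronglyMeasurable.mul hm1).mul (hc2.stronglyMeasurable.mul hm2'))
      have heqfun : (Function.uncurry fun (ξ : ℝ) (p : ℝ × ℝ) =>
          (Complex.exp (-(Complex.I * (p.1:ℂ) * (ξ:ℂ) / (h:ℂ))) * v p.1)
            * (starRingEnd ℂ) (Complex.exp (-(Complex.I * (p.2:ℂ) * (ξ:ℂ) / (h:ℂ))) * v p.2))
          = fun q : ℝ × ℝ × ℝ =>
            (Complex.exp (-(Complex.I * (q.2.1:ℂ) * (q.1:ℂ) / (h:ℂ))) * v q.2.1)
              * ((starRingEnd ℂ) (Complex.exp (-(Complex.I * (q.2.2:ℂ) * (q.1:ℂ) / (h:ℂ))))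
                * (starRingEnd ℂ) (v q.2.2)) := by
        funext q
        simp only [Function.uncurry, map_mul]
      rw [heqfun]
      exact this.aestronglyMeasurable
    have hg2 : Integrable (fun p : ℝ × ℝ => ‖v p.1‖ * ‖v p.2‖) (ν.prod ν) :=
      hv1.norm.mul_prod hv1.norm
    have hg3 : Integrable (fun q : ℝ × ℝ × ℝ => (1:ℝ) * (‖v q.2.1‖ * ‖v q.2.2‖))
        (ν.prod (ν.prod ν)) := (integrable_const (1:ℝ)).mul_prod hg2
    have hg4 : Integrable (fun q : ℝ × ℝ × ℝ => ‖v q.2.1‖ * ‖v q.2.2‖)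
        (ν.prod (ν.prod ν)) := by simpa using hg3
    refine Integrable.mono' hg4 hsm ?_
    refine Filter.Eventually.of_forall fun q => ?_
    simp only [Function.uncurry, norm_mul, RCLike.norm_conj, hnorm_exp, one_mul, le_refl]
  -- inner ξ-integral
  have hinner : ∀ p : ℝ × ℝ,
      (∫ ξ : ℝ,
          (Complex.exp (-(Complex.I * (p.1:ℂ) * (ξ:ℂ) / (h:ℂ))) * v p.1)
            * (starRingEnd ℂ) (Complex.exp (-(Complex.I * (p.2:ℂ) * (ξ:ℂ) / (h:ℂ))) * v p.2) ∂ν)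
        = (v p.1 * (starRingEnd ℂ) (v p.2)) * Kker ν h p.1 p.2 := by
    intro p
    have hpt : ∀ ξ : ℝ,
        (Complex.exp (-(Complex.I * (p.1:ℂ) * (ξ:ℂ) / (h:ℂ))) * v p.1)
          * (starRingEnd ℂ) (Complex.exp (-(Complex.I * (p.2:ℂ) * (ξ:ℂ) / (h:ℂ))) * v p.2)
        = (v p.1 * (starRingEnd ℂ) (v p.2))
          * Complex.exp (-(Complex.I * (ξ:ℂ) * (((p.1 - p.2) / h : ℝ) : ℂ))) := by
      intro ξ
      rw [map_mul, ← hEprod p.1 p.2 ξ]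
      ring
    calc (∫ ξ : ℝ,
          (Complex.exp (-(Complex.I * (p.1:ℂ) * (ξ:ℂ) / (h:ℂ))) * v p.1)
            * (starRingEnd ℂ) (Complex.exp (-(Complex.I * (p.2:ℂ) * (ξ:ℂ) / (h:ℂ))) * v p.2) ∂ν)
        = ∫ ξ : ℝ, (v p.1 * (starRingEnd ℂ) (v p.2))
            * Complex.exp (-(Complex.I * (ξ:ℂ) * (((p.1 - p.2) / h : ℝ) : ℂ))) ∂ν :=
          integral_congr_ae (Filter.Eventually.of_forall hpt)
      _ = (v p.1 * (starRingEnd ℂ) (v p.2)) * Kker ν h p.1 p.2 := by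
          rw [MeasureTheory.integral_const_mul, Kker_eq]
  -- the main real inequality
  have hmain_re : ∫ ξ, ‖T ξ‖ ^ 2 ∂ν
      ≤ ∫ p : ℝ × ℝ, ‖Kker ν h p.1 p.2‖ * (‖v p.1‖ * ‖v p.2‖) ∂(ν.prod ν) := by
    have hIntTT : Integrable (fun ξ => T ξ * (starRingEnd ℂ) (T ξ)) ν := by
      have hsm : AEStronglyMeasurable (fun ξ => T ξ * (starRingEnd ℂ) (T ξ)) ν :=
        (hT_sm.mul ((continuous_star : Continuous (star : ℂ → ℂ)).comp_stronglyMeasurable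
          hT_sm)).aestronglyMeasurable
      refine Integrable.mono' (integrable_const (c₁ * c₁)) hsm ?_
      refine Filter.Eventually.of_forall fun ξ => ?_
      rw [norm_mul, RCLike.norm_conj]
      exact mul_le_mul (hTb ξ) (hTb ξ) (norm_nonneg _) hc₁0
    have hTsq : ∀ ξ : ℝ, ‖T ξ‖ ^ 2 = (T ξ * (starRingEnd ℂ) (T ξ)).re := by
      intro ξ
      rw [Complex.mul_conj, Complex.ofReal_re, Complex.normSq_eq_norm_sq]
    have hre := integral_re (μ := ν) hIntTT
    simp only [RCLike.re_to_complex] at hre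
    calc ∫ ξ, ‖T ξ‖ ^ 2 ∂ν
        = ∫ ξ, (T ξ * (starRingEnd ℂ) (T ξ)).re ∂ν :=
          integral_congr_ae (Filter.Eventually.of_forall fun ξ => hTsq ξ)
      _ = (∫ ξ, T ξ * (starRingEnd ℂ) (T ξ) ∂ν).re := hre
      _ = (∫ p : ℝ × ℝ, (v p.1 * (starRingEnd ℂ) (v p.2)) * Kker ν h p.1 p.2 ∂(ν.prod ν)).re := by
          congr 1
          calc ∫ ξ, T ξ * (starRingEnd ℂ) (T ξ) ∂ν
              = ∫ ξ, ∫ p : ℝ × ℝ,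
                  (Complex.exp (-(Complex.I * (p.1:ℂ) * (ξ:ℂ) / (h:ℂ))) * v p.1)
                    * (starRingEnd ℂ)
                      (Complex.exp (-(Complex.I * (p.2:ℂ) * (ξ:ℂ) / (h:ℂ))) * v p.2)
                  ∂(ν.prod ν) ∂ν :=
                integral_congr_ae (Filter.Eventually.of_forall hstep1)
            _ = ∫ p : ℝ × ℝ, ∫ ξ,
                  (Complex.exp (-(Complex.I * (p.1:ℂ) * (ξ:ℂ) / (h:ℂ))) * v p.1)
                    * (starRingEnd ℂ)
                      (Complex.exp (-(Complex.I * (p.2:ℂ) * (ξ:ℂ) / (h:ℂ))) * v p.2)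
                  ∂ν ∂(ν.prod ν) := integral_integral_swap hFint
            _ = ∫ p : ℝ × ℝ, (v p.1 * (starRingEnd ℂ) (v p.2)) * Kker ν h p.1 p.2 ∂(ν.prod ν) :=
                integral_congr_ae (Filter.Eventually.of_forall hinner)
      _ ≤ ‖∫ p : ℝ × ℝ, (v p.1 * (starRingEnd ℂ) (v p.2)) * Kker ν h p.1 p.2 ∂(ν.prod ν)‖ := by
          exact Complex.re_le_norm _
      _ ≤ ∫ p : ℝ × ℝ, ‖(v p.1 * (starRingEnd ℂ) (v p.2)) * Kker ν h p.1 p.2‖ ∂(ν.prod ν) :=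
          norm_integral_le_integral_norm _
      _ = ∫ p : ℝ × ℝ, ‖Kker ν h p.1 p.2‖ * (‖v p.1‖ * ‖v p.2‖) ∂(ν.prod ν) := by
          refine integral_congr_ae (Filter.Eventually.of_forall fun p => ?_)
          dsimp only
          rw [norm_mul, norm_mul, RCLike.norm_conj]
          ring
  -- ENNReal side
  set S : ℝ := 11 * C₀ ^ 2 * h ^ (δ / 2 - 2 * ε) with hS_def
  have hS0 : 0 ≤ S := by positivity
  have hrow : ∀ x : ℝ, ∫⁻ y, (‖Kker ν h x y‖₊ : ENNReal) ∂ν ≤ ENNReal.ofReal S :=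
    fun x => schur_row hC₀ hδ hδ1 hε hεδ hM hreg hν1 hdecay hh0 hhM x
  set J2 : ENNReal := ∫⁻ x, (‖v x‖₊ : ENNReal) ^ (2:ℝ) ∂ν with hJ2_def
  have hJ2top : J2 ≠ ⊤ := by
    have h2 := hvL2.2
    rw [eLpNorm_eq_lintegral_rpow_enorm_toReal (p := 2) (by norm_num) (by norm_num)] at h2
    simp only [enorm_eq_nnnorm] at h2
    intro hcon
    rw [show ((2:ENNReal)).toReal = (2:ℝ) by norm_num] at h2
    rw [← hJ2_def, hcon] at h2
    rw [ENNReal.top_rpow_of_pos (by norm_num)] at h2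
    exact (lt_irrefl _ h2).elim
  have hSJtop : ENNReal.ofReal S * J2 ≠ ⊤ := ENNReal.mul_ne_top ENNReal.ofReal_ne_top hJ2top
  have hKmeas : Measurable fun p : ℝ × ℝ => (‖Kker ν h p.1 p.2‖₊ : ENNReal) := hK_sm.measurable.enorm
  have hvmeas1 : Measurable fun p : ℝ × ℝ => (‖v p.1‖₊ : ENNReal) :=
    (hv_sm.comp_measurable measurable_fst).measurable.enorm
  have hvmeas2 : Measurable fun p : ℝ × ℝ => (‖v p.2‖₊ : ENNReal) :=
    (hv_sm.comp_measurable measurable_snd).measurable.enorm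
  -- the two Hoelder factors
  have hfactor1 : ∫⁻ p : ℝ × ℝ,
      (‖Kker ν h p.1 p.2‖₊ : ENNReal) * (‖v p.1‖₊ : ENNReal) ^ (2:ℝ) ∂(ν.prod ν)
      ≤ ENNReal.ofReal S * J2 := by
    rw [lintegral_prod (fun p : ℝ × ℝ => (‖Kker ν h p.1 p.2‖₊ : ENNReal) * (‖v p.1‖₊ : ENNReal) ^ (2:ℝ)) (hKmeas.mul (hvmeas1.pow_const _)).aemeasurable]
    have hx : ∀ x : ℝ, ∫⁻ y, (‖Kker ν h x y‖₊ : ENNReal) * (‖v x‖₊ : ENNReal) ^ (2:ℝ) ∂ν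
        ≤ ENNReal.ofReal S * (‖v x‖₊ : ENNReal) ^ (2:ℝ) := by
      intro x
      rw [lintegral_mul_const' _ _
        (ENNReal.rpow_ne_top_of_nonneg (by norm_num) ENNReal.coe_ne_top)]
      exact mul_le_mul_left (hrow x) _
    calc ∫⁻ x, ∫⁻ y, (‖Kker ν h x y‖₊ : ENNReal) * (‖v x‖₊ : ENNReal) ^ (2:ℝ) ∂ν ∂ν
        ≤ ∫⁻ x, ENNReal.ofReal S * (‖v x‖₊ : ENNReal) ^ (2:ℝ) ∂ν := lintegral_mono hx
      _ = ENNReal.ofReal S * J2 := lintegral_const_mul' _ _ ENNReal.ofReal_ne_top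
  have hfactor2 : ∫⁻ p : ℝ × ℝ,
      (‖Kker ν h p.1 p.2‖₊ : ENNReal) * (‖v p.2‖₊ : ENNReal) ^ (2:ℝ) ∂(ν.prod ν)
      ≤ ENNReal.ofReal S * J2 := by
    rw [lintegral_prod_symm (fun p : ℝ × ℝ => (‖Kker ν h p.1 p.2‖₊ : ENNReal) * (‖v p.2‖₊ : ENNReal) ^ (2:ℝ)) (hKmeas.mul (hvmeas2.pow_const _)).aemeasurable]
    have hy : ∀ y : ℝ, ∫⁻ x, (‖Kker ν h x y‖₊ : ENNReal) * (‖v y‖₊ : ENNReal) ^ (2:ℝ) ∂ν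
        ≤ ENNReal.ofReal S * (‖v y‖₊ : ENNReal) ^ (2:ℝ) := by
      intro y
      rw [lintegral_mul_const' _ _
        (ENNReal.rpow_ne_top_of_nonneg (by norm_num) ENNReal.coe_ne_top)]
      refine mul_le_mul_left ?_ _
      have hsymm : ∀ x : ℝ, (‖Kker ν h x y‖₊ : ENNReal) = (‖Kker ν h y x‖₊ : ENNReal) := by
        intro x
        rw [← enorm_eq_nnnorm, ← enorm_eq_nnnorm, ← ofReal_norm, ← ofReal_norm, norm_Kker_symm]
      rw [lintegral_congr hsymm]
      exact hrow y
    calc ∫⁻ y, ∫⁻ x, (‖Kker ν h x y‖₊ : ENNReal) * (‖v y‖₊ : ENNReal) ^ (2:ℝ) ∂ν ∂ν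
        ≤ ∫⁻ y, ENNReal.ofReal S * (‖v y‖₊ : ENNReal) ^ (2:ℝ) ∂ν := lintegral_mono hy
      _ = ENNReal.ofReal S * J2 := lintegral_const_mul' _ _ ENNReal.ofReal_ne_top
  -- Cauchy-Schwarz (Hoelder) on the product
  have hWlin : ∫⁻ p : ℝ × ℝ,
      (‖Kker ν h p.1 p.2‖₊ : ENNReal) * ((‖v p.1‖₊ : ENNReal) * (‖v p.2‖₊ : ENNReal))
      ∂(ν.prod ν) ≤ ENNReal.ofReal S * J2 := by
    set f : ℝ × ℝ → ENNReal :=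
      fun p => (‖Kker ν h p.1 p.2‖₊ : ENNReal) ^ ((1:ℝ)/2) * (‖v p.1‖₊ : ENNReal) with hf_def
    set g : ℝ × ℝ → ENNReal :=
      fun p => (‖Kker ν h p.1 p.2‖₊ : ENNReal) ^ ((1:ℝ)/2) * (‖v p.2‖₊ : ENNReal) with hg_def
    have hfg : ∀ p : ℝ × ℝ,
        (‖Kker ν h p.1 p.2‖₊ : ENNReal) * ((‖v p.1‖₊ : ENNReal) * (‖v p.2‖₊ : ENNReal))
        = (f * g) p := by
      intro p
      rw [Pi.mul_apply, hf_def, hg_def]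
      dsimp only
      rw [mul_mul_mul_comm, ← ENNReal.rpow_add_of_nonneg _ _ (by norm_num) (by norm_num)]
      norm_num
    have hfm : AEMeasurable f (ν.prod ν) := ((hKmeas.pow_const _).mul hvmeas1).aemeasurable
    have hgm : AEMeasurable g (ν.prod ν) := ((hKmeas.pow_const _).mul hvmeas2).aemeasurable
    have hconj : Real.HolderConjugate 2 2 := Real.HolderConjugate.two_two
    have hholder := ENNReal.lintegral_mul_le_Lp_mul_Lq (ν.prod ν) hconj hfm hgm
    have hf2 : ∀ p : ℝ × ℝ, f p ^ (2:ℝ)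
        = (‖Kker ν h p.1 p.2‖₊ : ENNReal) * (‖v p.1‖₊ : ENNReal) ^ (2:ℝ) := by
      intro p
      rw [hf_def]
      dsimp only
      rw [ENNReal.mul_rpow_of_nonneg _ _ (by norm_num), ← ENNReal.rpow_mul]
      norm_num
    have hg2 : ∀ p : ℝ × ℝ, g p ^ (2:ℝ)
        = (‖Kker ν h p.1 p.2‖₊ : ENNReal) * (‖v p.2‖₊ : ENNReal) ^ (2:ℝ) := by
      intro p
      rw [hg_def]
      dsimp only
      rw [ENNReal.mul_rpow_of_nonneg _ _ (by norm_num), ← ENNReal.rpow_mul]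
      norm_num
    calc ∫⁻ p : ℝ × ℝ,
        (‖Kker ν h p.1 p.2‖₊ : ENNReal) * ((‖v p.1‖₊ : ENNReal) * (‖v p.2‖₊ : ENNReal))
        ∂(ν.prod ν)
        = ∫⁻ p, (f * g) p ∂(ν.prod ν) := lintegral_congr hfg
      _ ≤ (∫⁻ p, f p ^ (2:ℝ) ∂(ν.prod ν)) ^ ((1:ℝ)/2)
          * (∫⁻ p, g p ^ (2:ℝ) ∂(ν.prod ν)) ^ ((1:ℝ)/2) := by
          simpa using hholder
      _ ≤ (ENNReal.ofReal S * J2) ^ ((1:ℝ)/2) * (ENNReal.ofReal S * J2) ^ ((1:ℝ)/2) := by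
          apply mul_le_mul'
          · apply ENNReal.rpow_le_rpow _ (by norm_num)
            rw [lintegral_congr hf2]
            exact hfactor1
          · apply ENNReal.rpow_le_rpow _ (by norm_num)
            rw [lintegral_congr hg2]
            exact hfactor2
      _ = ENNReal.ofReal S * J2 := by
          rw [← ENNReal.rpow_add_of_nonneg _ _ (by norm_num) (by norm_num)]
          norm_num
  -- from the real integral to the lintegral bound
  have hWreal : ∫ p : ℝ × ℝ, ‖Kker ν h p.1 p.2‖ * (‖v p.1‖ * ‖v p.2‖) ∂(ν.prod ν)
      ≤ (ENNReal.ofReal S * J2).toReal := by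
    have hnn : 0 ≤ᵐ[ν.prod ν] fun p : ℝ × ℝ => ‖Kker ν h p.1 p.2‖ * (‖v p.1‖ * ‖v p.2‖) :=
      Filter.Eventually.of_forall fun p => by positivity
    have hsm2 : AEStronglyMeasurable
        (fun p : ℝ × ℝ => ‖Kker ν h p.1 p.2‖ * (‖v p.1‖ * ‖v p.2‖)) (ν.prod ν) :=
      (hK_sm.norm.mul (((hv_sm.comp_measurable measurable_fst).norm).mul
        ((hv_sm.comp_measurable measurable_snd).norm))).aestronglyMeasurable
    rw [integral_eq_lintegral_of_nonneg_ae hnn hsm2]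
    apply ENNReal.toReal_mono hSJtop
    have hofreal : ∀ p : ℝ × ℝ,
        ENNReal.ofReal (‖Kker ν h p.1 p.2‖ * (‖v p.1‖ * ‖v p.2‖))
        = (‖Kker ν h p.1 p.2‖₊ : ENNReal) * ((‖v p.1‖₊ : ENNReal) * (‖v p.2‖₊ : ENNReal)) := by
      intro p
      rw [ENNReal.ofReal_mul (norm_nonneg _), ENNReal.ofReal_mul (norm_nonneg _),
        ofReal_norm, ofReal_norm, ofReal_norm, enorm_eq_nnnorm, enorm_eq_nnnorm, enorm_eq_nnnorm]
    rw [lintegral_congr hofreal]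
    exact hWlin
  have hI2 : ∫ ξ, ‖T ξ‖ ^ 2 ∂ν ≤ (ENNReal.ofReal S * J2).toReal := le_trans hmain_re hWreal
  -- integrability of ‖T‖²
  have hTint : Integrable (fun ξ => ‖T ξ‖ ^ 2) ν := by
    have hsm3 : AEStronglyMeasurable (fun ξ => ‖T ξ‖ ^ 2) ν := by
      have : (fun ξ => ‖T ξ‖ ^ 2) = fun ξ => ‖T ξ‖ * ‖T ξ‖ := by
        funext ξ; rw [pow_two]
      rw [this]
      exact (hT_sm.norm.mul hT_sm.norm).aestronglyMeasurable
    refine Integrable.mono' (integrable_const (c₁ ^ 2)) hsm3 ?_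
    refine Filter.Eventually.of_forall fun ξ => ?_
    rw [Real.norm_eq_abs, abs_of_nonneg (by positivity)]
    exact pow_le_pow_left₀ (norm_nonneg _) (hTb ξ) 2
  -- link to the lintegral
  have hlink : ∫⁻ ξ, (‖T ξ‖₊ : ENNReal) ^ (2:ℝ) ∂ν
      = ENNReal.ofReal (∫ ξ, ‖T ξ‖ ^ 2 ∂ν) := by
    rw [ofReal_integral_eq_lintegral_ofReal hTint
      (Filter.Eventually.of_forall fun ξ => by positivity)]
    refine lintegral_congr fun ξ => ?_
    rw [← enorm_eq_nnnorm, ← ofReal_norm, ENNReal.ofReal_rpow_of_nonneg (norm_nonneg _) (by norm_num)]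
    congr 1
    rw [show ((2:ℝ)) = ((2:ℕ):ℝ) by norm_num, Real.rpow_natCast]
  -- final constant estimate
  have hSC : S ^ ((1:ℝ)/2) ≤ 4 * (C₀ + 1) * h ^ (δ / 4 - ε) := by
    have hSsplit : S ^ ((1:ℝ)/2)
        = (11 * C₀ ^ 2) ^ ((1:ℝ)/2) * h ^ (δ / 4 - ε) := by
      rw [hS_def, Real.mul_rpow (by positivity) (Real.rpow_nonneg hh0.le _),
        ← Real.rpow_mul hh0.le]
      congr 1
      ring
    rw [hSsplit]
    have h16 : (11 * C₀ ^ 2 : ℝ) ≤ (4 * (C₀ + 1)) ^ 2 := by nlinarith [sq_nonneg C₀, hC₀.le]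
    have hc : (11 * C₀ ^ 2) ^ ((1:ℝ)/2) ≤ 4 * (C₀ + 1) := by
      calc (11 * C₀ ^ 2) ^ ((1:ℝ)/2) ≤ ((4 * (C₀ + 1)) ^ 2) ^ ((1:ℝ)/2) :=
            Real.rpow_le_rpow (by positivity) h16 (by norm_num)
        _ = 4 * (C₀ + 1) := by
            rw [← Real.rpow_natCast (4 * (C₀ + 1)) 2, ← Real.rpow_mul (by positivity)]
            norm_num
    exact mul_le_mul_of_nonneg_right hc (Real.rpow_nonneg hh0.le _)
  -- conclude
  rw [eLpNorm_eq_lintegral_rpow_enorm_toReal (p := 2) (by norm_num) (by norm_num),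
    eLpNorm_eq_lintegral_rpow_enorm_toReal (p := 2) (by norm_num) (by norm_num)]
  simp only [enorm_eq_nnnorm]
  rw [show ((2:ENNReal)).toReal = (2:ℝ) by norm_num]
  rw [hlink]
  calc (ENNReal.ofReal (∫ ξ, ‖T ξ‖ ^ 2 ∂ν)) ^ ((1:ℝ)/2)
      ≤ (ENNReal.ofReal S * J2) ^ ((1:ℝ)/2) := by
        apply ENNReal.rpow_le_rpow _ (by norm_num)
        refine le_trans (ENNReal.ofReal_le_ofReal hI2) ?_
        rw [ENNReal.ofReal_toReal hSJtop]
    _ = (ENNReal.ofReal S) ^ ((1:ℝ)/2) * J2 ^ ((1:ℝ)/2) :=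
        ENNReal.mul_rpow_of_nonneg _ _ (by norm_num)
    _ ≤ ENNReal.ofReal (4 * (C₀ + 1) * h ^ (δ / 4 - ε)) * J2 ^ ((1:ℝ)/2) := by
        refine mul_le_mul_left ?_ _
        rw [ENNReal.ofReal_rpow_of_nonneg hS0 (by norm_num)]
        exact ENNReal.ofReal_le_ofReal hSC
    _ = ENNReal.ofReal (4 * (C₀ + 1) * h ^ (δ / 4 - ε))
        * (∫⁻ x, (‖v x‖₊ : ENNReal) ^ (2:ℝ) ∂ν) ^ ((1:ℝ)/2) := by rw [hJ2_def]
    _ = _ := by norm_num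


end FUPRandom
end
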